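/- arXiv:1905.08842 — 5 statements merged into one kernel-verified Lean document; each statement's English description precedes it below -/
import Mathlib

section
/- If S is a finite relevance-connected set of propositional clauses with |S| = n, then for any two distinct clauses C and D in S there is an alternating path in S from C to D of length at most 2n − 2. -/
/-- A propositional literal: an atom together with a Boolean sign. -/
abbrev Lit (α : Type) := α × Bool

/-- A propositional clause: a finite set of literals. -/
abbrev Clause (α : Type) := Finset (α × Bool)

/-- The complement of a literal flips its sign. -/
def Lit.compl {α : Type} (L : Lit α) : Lit α := (L.1, !L.2)

/-- A valuation satisfies a literal `(a, s)` iff `v a = s`. -/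
def SatLit {α : Type} (v : α → Bool) (L : Lit α) : Prop := v L.1 = L.2

/-- A valuation satisfies a clause iff it satisfies some literal of it. -/
def SatClause {α : Type} (v : α → Bool) (C : Clause α) : Prop := ∃ L ∈ C, SatLit v L

/-- A valuation satisfies a set of clauses iff it satisfies every clause in it. -/
def SatSet {α : Type} (v : α → Bool) (S : Set (Clause α)) : Prop := ∀ C ∈ S, SatClause v C

/-- A set of clauses is satisfiable if some valuation satisfies it. -/
def Satisfiable {α : Type} (S : Set (Clause α)) : Prop := ∃ v, SatSet v S

/-- `IsAltPath S Cs ps` : the sequence of clauses `Cs` together with the list of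
linking literal pairs `ps` is an alternating path in `S`.  The path
`C₁,(L₁,M₂),C₂,…,(Lₙ₋₁,Mₙ),Cₙ` is encoded with `Cs = [C₁,…,Cₙ]` and
`ps = [(L₁,M₂),…,(Lₙ₋₁,Mₙ)]`. -/
def IsAltPath {α : Type} [DecidableEq α] (S : Set (Clause α))
    (Cs : List (Clause α)) (ps : List (Lit α × Lit α)) : Prop :=
  Cs ≠ [] ∧ ps.length + 1 = Cs.length ∧
  (∀ C ∈ Cs, C ∈ S) ∧
  (∀ i, ∀ h : i < ps.length,
    (ps.get ⟨i, h⟩).1 ∈ Cs.getD i ∅ ∧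
    (ps.get ⟨i, h⟩).2 ∈ Cs.getD (i + 1) ∅ ∧
    (ps.get ⟨i, h⟩).2 = Lit.compl (ps.get ⟨i, h⟩).1) ∧
  (∀ i, ∀ h : i + 1 < ps.length,
    (ps.get ⟨i + 1, h⟩).1 ≠ (ps.get ⟨i, Nat.lt_of_succ_lt h⟩).2)

/-- There is an alternating path in `S` from `C` to `D` of length `n`
(length counts the clauses). -/
def AltPathFromTo {α : Type} [DecidableEq α] (S : Set (Clause α))
    (C D : Clause α) (n : ℕ) : Prop :=
  ∃ Cs ps, IsAltPath S Cs ps ∧ Cs.head? = some C ∧ Cs.getLast? = some D ∧ Cs.length = n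

/-- The relevance distance `d_S(C, D)`: the minimum length of an alternating path
in `S` from `C` to `D`, or `∞` if there is none. -/
noncomputable def relDist {α : Type} [DecidableEq α] (S : Set (Clause α))
    (C D : Clause α) : ℕ∞ :=
  ⨅ n ∈ {n : ℕ | AltPathFromTo S C D n}, (n : ℕ∞)

/-- `d_S(T, C) = min {d_S(D, C) : D ∈ T}`. -/
noncomputable def relDistFrom {α : Type} [DecidableEq α] (S T : Set (Clause α))
    (C : Clause α) : ℕ∞ :=
  ⨅ D ∈ T, relDist S D C

/-- `R_{n,S}(T) = {C ∈ S : d_S(T, C) ≤ n}`. -/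
def RelSet {α : Type} [DecidableEq α] (n : ℕ) (S T : Set (Clause α)) : Set (Clause α) :=
  {C ∈ S | relDistFrom S T C ≤ (n : ℕ∞)}

/-- A set of clauses is relevance connected if between any two of its clauses
there is an alternating path in it. -/
def RelevanceConnected {α : Type} [DecidableEq α] (S : Set (Clause α)) : Prop :=
  ∀ C ∈ S, ∀ D ∈ S, ∃ n, AltPathFromTo S C D n

/-- A set of clauses is minimal unsatisfiable if it is unsatisfiable and every
proper subset of it is satisfiable. -/
def MinimalUnsat {α : Type} (S : Set (Clause α)) : Prop :=
  ¬ Satisfiable S ∧ ∀ T ⊂ S, Satisfiable T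

/-- `S'` is a support set for `S`: `S' ⊆ S` and every unsatisfiable subset of `S`
meets `S'`. -/
def IsSupport {α : Type} (S S' : Set (Clause α)) : Prop :=
  S' ⊆ S ∧ ∀ T ⊆ S, ¬ Satisfiable T → (T ∩ S').Nonempty

/-- `D` is a resolvent of `C₁` and `C₂` upon literal `L`. -/
def IsResolvent {α : Type} [DecidableEq α] (D C₁ C₂ : Clause α) (L : Lit α) : Prop :=
  L ∈ C₁ ∧ Lit.compl L ∈ C₂ ∧ D = (C₁.erase L) ∪ (C₂.erase (Lit.compl L))

/-- `Cs` is a resolution sequence from `S`: every clause is an input clause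
(member of `S`) or a resolvent of two earlier clauses. -/
def IsResolutionSeq {α : Type} [DecidableEq α] (S : Set (Clause α))
    (Cs : List (Clause α)) : Prop :=
  ∀ i, ∀ h : i < Cs.length,
    Cs.get ⟨i, h⟩ ∈ S ∨
    ∃ j k L, j < i ∧ k < i ∧ IsResolvent (Cs.get ⟨i, h⟩) (Cs.getD j ∅) (Cs.getD k ∅) L

/-- `Cs` is a resolution refutation of length `n` from `S`: a resolution sequence
of `n` clauses ending in the empty clause. -/
def IsRefutation {α : Type} [DecidableEq α] (S : Set (Clause α))
    (Cs : List (Clause α)) (n : ℕ) : Prop :=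
  IsResolutionSeq S Cs ∧ Cs.length = n ∧ Cs.getLast? = some (∅ : Clause α)

section WalkAux

variable {α : Type} [DecidableEq α]

/-- A segment of an alternating walk: a clause together with its exit literal `L`
and the complementary literal `M` sitting in the next clause. -/
abbrev Seg (α : Type) := Clause α × (Lit α × Lit α)

def SegOk (S : Set (Clause α)) (s : Seg α) : Prop :=
  s.1 ∈ S ∧ s.2.1 ∈ s.1 ∧ s.2.2 = Lit.compl s.2.1

def Adj (s t : Seg α) : Prop := s.2.2 ∈ t.1 ∧ t.2.1 ≠ s.2.2

def WalkOk (S : Set (Clause α)) (l : List (Seg α)) (E : Clause α) : Prop :=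
  (∀ s ∈ l, SegOk S s) ∧ l.Chain' Adj ∧ (∀ s ∈ l.getLast?, s.2.2 ∈ E) ∧ E ∈ S

def hdC (l : List (Seg α)) (E : Clause α) : Clause α :=
  ((l.head?).map Prod.fst).getD E

lemma to_walk {S : Set (Clause α)} {C D : Clause α} {n : ℕ}
    (h : AltPathFromTo S C D n) :
    ∃ l : List (Seg α), WalkOk S l D ∧ hdC l D = C ∧ l.length + 1 = n := by
  obtain ⟨Cs, ps, ⟨hne, hlen, hmem, hp, hadj⟩, hhd, hlast, hcslen⟩ := h
  refine ⟨Cs.zip ps, ?_, ?_, ?_⟩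
  · have hzl : (Cs.zip ps).length = ps.length := by
      rw [List.length_zip]; omega
    refine ⟨?_, ?_, ?_, ?_⟩
    · intro s hs
      obtain ⟨⟨i, hi⟩, rfl⟩ := List.mem_iff_get.mp hs
      rw [hzl] at hi
      have hget : (Cs.zip ps).get ⟨i, by omega⟩ = (Cs[i]'(by omega), ps[i]'hi) := by
        simp [List.getElem_zip]
      rw [hget]
      obtain ⟨h1, h2, h3⟩ := hp i hi
      refine ⟨hmem _ (List.getElem_mem _), ?_, ?_⟩
      · rw [List.getD_eq_getElem _ _ (show i < Cs.length from by omega)] at h1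
        simpa using h1
      · simpa using h3
    · refine List.isChain_iff_getElem.mpr ?_
      intro i hi
      rw [hzl] at hi
      have hi1 : i + 1 < ps.length := by omega
      have hg1 : (Cs.zip ps).get ⟨i, by omega⟩ = (Cs[i]'(by omega), ps[i]'(by omega)) := by
        simp [List.getElem_zip]
      have hg2 : (Cs.zip ps).get ⟨i + 1, by omega⟩ =
          (Cs[i+1]'(by omega), ps[i+1]'hi1) := by
        simp [List.getElem_zip]
      simp only [List.get_eq_getElem] at hg1 hg2
      rw [hg1, hg2]
      obtain ⟨h1, h2, h3⟩ := hp i (by omega)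
      refine ⟨?_, ?_⟩
      · rw [List.getD_eq_getElem _ _ (show i + 1 < Cs.length from by omega)] at h2
        simpa using h2
      · simpa using hadj i hi1
    · intro s hs
      rcases Nat.eq_zero_or_pos ps.length with hps | hps
      · have : Cs.zip ps = [] := by
          apply List.eq_nil_of_length_eq_zero; omega
        rw [this] at hs; simp at hs
      · rw [List.getLast?_eq_getElem?, List.getElem?_eq_getElem (by omega)] at hs
        simp only [Option.mem_def, Option.some.injEq] at hs
        set k := (Cs.zip ps).length - 1 with hk
        have hkp : k = ps.length - 1 := by omega
        have hg : (Cs.zip ps)[k]'(by omega) = (Cs[k]'(by omega), ps[k]'(by omega)) := by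
          simp [List.getElem_zip]
        obtain ⟨h1, h2, h3⟩ := hp k (by omega)
        rw [List.getD_eq_getElem _ _ (show k + 1 < Cs.length from by omega)] at h2
        have hD : Cs[k+1]'(by omega) = D := by
          rw [List.getLast?_eq_getElem?, List.getElem?_eq_getElem (by omega)] at hlast
          simp only [Option.some.injEq] at hlast
          rw [← hlast]
          congr 1; omega
        rw [← hs, hg]
        rw [hD] at h2
        simpa using h2
    · have : D ∈ Cs := by
        exact List.mem_of_mem_getLast? hlast
      exact hmem _ this
  · rcases Cs with _ | ⟨C0, Cs'⟩
    · exact absurd rfl hne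
    · simp only [List.head?_cons, Option.some.injEq] at hhd
      rcases ps with _ | ⟨p0, ps'⟩
      · have : Cs' = [] := by
          simp only [List.length_nil, List.length_cons] at hlen
          exact List.eq_nil_of_length_eq_zero (by omega)
        subst this
        simp only [List.getLast?_singleton, Option.some.injEq] at hlast
        simp [hdC, List.zip, ← hhd, ← hlast]
      · simp [hdC, List.zip, hhd]
  · have : (Cs.zip ps).length = ps.length := by rw [List.length_zip]; omega
    omega

lemma from_walk {S : Set (Clause α)} {l : List (Seg α)} {E : Clause α}
    (h : WalkOk S l E) :
    AltPathFromTo S (hdC l E) E (l.length + 1) := by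
  obtain ⟨hmem, hch, hlast, hES⟩ := h
  refine ⟨l.map Prod.fst ++ [E], l.map Prod.snd, ⟨?_, ?_, ?_, ?_, ?_⟩, ?_, ?_, ?_⟩
  · simp
  · simp
  · intro X hX
    rw [List.mem_append] at hX
    rcases hX with hX | hX
    · obtain ⟨s, hs, rfl⟩ := List.mem_map.mp hX
      exact (hmem s hs).1
    · simp only [List.mem_singleton] at hX; subst hX; exact hES
  · intro i hi
    simp only [List.length_map] at hi
    have hget : (l.map Prod.snd).get ⟨i, by simpa using hi⟩ = (l[i]'hi).2 := by
      simp
    have hCsi : (l.map Prod.fst ++ [E]).getD i ∅ = (l[i]'hi).1 := by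
      rw [List.getD_eq_getElem (hn := by simp; omega)]
      rw [List.getElem_append_left (by simpa using hi)]
      simp
    obtain ⟨hS, hL, hM⟩ := hmem _ (l.getElem_mem hi)
    refine ⟨by rw [hget, hCsi]; exact hL, ?_, by rw [hget]; exact hM⟩
    rw [hget]
    rcases Nat.lt_or_ge (i + 1) l.length with hi1 | hi1
    · have hCsi1 : (l.map Prod.fst ++ [E]).getD (i + 1) ∅ = (l[i+1]'hi1).1 := by
        rw [List.getD_eq_getElem (hn := by simp; omega)]
        rw [List.getElem_append_left (by simpa using hi1)]
        simp
      rw [hCsi1]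
      have := List.isChain_iff_getElem.mp hch i (by omega)
      simpa using this.1
    · have hieq : i + 1 = l.length := by omega
      have hCsi1 : (l.map Prod.fst ++ [E]).getD (i + 1) ∅ = E := by
        rw [List.getD_eq_getElem (hn := by simp; omega)]
        rw [List.getElem_append_right (by simp; omega)]
        simp [hieq]
      rw [hCsi1]
      apply hlast
      rw [List.getLast?_eq_getElem?, List.getElem?_eq_getElem (by omega)]
      simp only [Option.mem_def, Option.some.injEq]
      congr 1; omega
  · intro i hi
    simp only [List.length_map] at hi
    have h1 : (l.map Prod.snd).get ⟨i+1, by simpa using hi⟩ = (l[i+1]'hi).2 := by simp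
    have h2 : (l.map Prod.snd).get ⟨i, by simp; omega⟩ = (l[i]'(by omega)).2 := by simp
    rw [h1, h2]
    have := List.isChain_iff_getElem.mp hch i (by omega)
    exact this.2
  · rcases l with _ | ⟨s, t⟩ <;> simp [hdC]
  · simp
  · simp

lemma hdC_eq_get {l : List (Seg α)} {E : Clause α} (h0 : 0 < l.length) :
    hdC l E = (l[0]'h0).1 := by
  rcases l with _ | ⟨s, t⟩
  · simp at h0
  · simp [hdC]

lemma walk_truncate {S : Set (Clause α)} {l : List (Seg α)} {E : Clause α}
    (h : WalkOk S l E) (j : ℕ) (hj : j < l.length)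
    (hE : (l[j]'hj).1 = E) : WalkOk S (l.take j) E := by
  obtain ⟨hmem, hch, hlast, hES⟩ := h
  refine ⟨fun s hs => hmem s (List.mem_of_mem_take hs), hch.take j, ?_, hES⟩
  intro s hs
  rcases Nat.eq_zero_or_pos j with rfl | hj0
  · simp at hs
  · obtain ⟨jj, rfl⟩ : ∃ jj, j = jj + 1 := ⟨j - 1, by omega⟩
    have htl : (l.take (jj+1)).length = jj + 1 := by rw [List.length_take]; omega
    rw [List.getLast?_eq_getElem?, List.getElem?_eq_getElem (by omega)] at hs
    simp only [Option.mem_def, Option.some.injEq] at hs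
    have hsg : s = l[jj]'(by omega) := by
      rw [← hs]
      rw [List.getElem_take]
      congr 1; omega
    have hadj : Adj (l[jj]'(by omega)) (l[jj+1]'hj) := by
      simpa using List.isChain_iff_getElem.mp hch jj (by omega)
    rw [hsg, ← hE]
    exact hadj.1

lemma walk_shortcut {S : Set (Clause α)} {l : List (Seg α)} {E : Clause α}
    (h : WalkOk S l E) (i j : ℕ) (hij : i < j) (hj : j < l.length)
    (hcl : (l[i]'(lt_trans hij hj)).1 = (l[j]'hj).1)
    (hcond : ∀ _ : 0 < i, (l[j]'hj).2.1 ≠ (l[i-1]'(by omega)).2.2) :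
    WalkOk S (l.take i ++ l.drop j) E := by
  obtain ⟨hmem, hch, hlast, hES⟩ := h
  have hdropne : l.drop j ≠ [] := by
    simp [List.drop_eq_nil_iff]; omega
  refine ⟨?_, ?_, ?_, hES⟩
  · intro s hs
    rw [List.mem_append] at hs
    rcases hs with hs | hs
    · exact hmem s (List.mem_of_mem_take hs)
    · exact hmem s (List.mem_of_mem_drop hs)
  · refine List.isChain_append.mpr ?_
    refine ⟨hch.take i, hch.drop j, ?_⟩
    intro x hx y hy
    rcases Nat.eq_zero_or_pos i with rfl | hi0
    · simp at hx
    · obtain ⟨ii, rfl⟩ : ∃ ii, i = ii + 1 := ⟨i - 1, by omega⟩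
      have htl : (l.take (ii+1)).length = ii + 1 := by rw [List.length_take]; omega
      rw [List.getLast?_eq_getElem?, List.getElem?_eq_getElem (by omega)] at hx
      simp only [Option.mem_def, Option.some.injEq] at hx
      have hxg : x = l[ii]'(by omega) := by
        rw [← hx, List.getElem_take]; congr 1; omega
      rw [List.head?_drop, List.getElem?_eq_getElem hj] at hy
      simp only [Option.mem_def, Option.some.injEq] at hy
      have hadj : Adj (l[ii]'(by omega)) (l[ii+1]'(by omega)) := by
        simpa using List.isChain_iff_getElem.mp hch ii (by omega)
      subst hxg
      rw [← hy]
      refine ⟨by rw [← hcl]; exact hadj.1, ?_⟩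
      have := hcond (by omega)
      simpa using this
  · intro s hs
    rw [List.getLast?_append] at hs
    have hld : (l.drop j).getLast? = l.getLast? := by
      rw [List.getLast?_eq_getElem?, List.getLast?_eq_getElem?,
        List.getElem?_drop]
      congr 1
      simp; omega
    rcases hdl : (l.drop j).getLast? with _ | t
    · exact absurd hdl (by simp [hdropne])
    · rw [hdl] at hs
      simp only [Option.some_or, Option.mem_def, Option.some.injEq] at hs
      subst hs
      apply hlast
      rw [← hld, hdl]; rfl

end WalkAux

/-- If `S` is a finite relevance-connected set of propositional clauses with
`|S| = n`, then any two distinct clauses of `S` are joined by an alternating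
path in `S` of length at most `2n − 2`. -/
theorem stmt_0 {α : Type} [DecidableEq α] (S : Finset (Clause α)) (n : ℕ)
    (hn : S.card = n) (hconn : RelevanceConnected (↑S : Set (Clause α)))
    (C D : Clause α) (hC : C ∈ S) (hD : D ∈ S) (hne : C ≠ D) :
    ∃ m ≤ 2 * n - 2, AltPathFromTo (↑S : Set (Clause α)) C D m := by
  classical
  have hCS : C ∈ (↑S : Set (Clause α)) := hC
  have hDS : D ∈ (↑S : Set (Clause α)) := hD
  have hn2 : 2 ≤ n := by
    have hsub : ({C, D} : Finset (Clause α)) ⊆ S := by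
      intro x hx
      rcases Finset.mem_insert.mp hx with rfl | hx
      · exact hC
      · rw [Finset.mem_singleton] at hx; subst hx; exact hD
    have hcs := Finset.card_le_card hsub
    rw [Finset.card_insert_of_notMem (by simpa using hne), Finset.card_singleton, hn] at hcs
    omega
  obtain ⟨n₀, hpath⟩ := hconn C hCS D hDS
  obtain ⟨l₀, hw₀, hh₀, -⟩ := to_walk hpath
  have hex : ∃ k, ∃ l : List (Seg α), WalkOk (↑S) l D ∧ hdC l D = C ∧ l.length = k :=
    ⟨l₀.length, l₀, hw₀, hh₀, rfl⟩
  obtain ⟨l, hw, hh, hlen⟩ := Nat.find_spec hex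
  have hmin : ∀ l' : List (Seg α), WalkOk (↑S) l' D → hdC l' D = C →
      l.length ≤ l'.length := by
    intro l' h1 h2
    rw [hlen]
    exact Nat.find_le ⟨l', h1, h2, rfl⟩
  have hlpos : 0 < l.length := by
    rcases l with _ | ⟨s, t⟩
    · exact absurd (by simpa [hdC] using hh) hne.symm
    · simp
  have hl0 : (l[0]'hlpos).1 = C := by rw [← hdC_eq_get hlpos, hh]
  have noD : ∀ j (hj : j < l.length), (l[j]'hj).1 ≠ D := by
    intro j hj hEq
    have hw' := walk_truncate hw j hj hEq
    rcases Nat.eq_zero_or_pos j with rfl | hj0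
    · exact hne (hl0.symm.trans hEq)
    · have hh' : hdC (l.take j) D = C := by
        rw [hdC, List.head?_take, if_neg (by omega : ¬ j = 0)]
        rw [← hh, hdC]
      have := hmin _ hw' hh'
      rw [List.length_take] at this
      omega
  have noShort : ∀ i j (hij : i < j) (hj : j < l.length),
      (l[i]'(lt_trans hij hj)).1 = (l[j]'hj).1 →
      (∀ _ : 0 < i, (l[j]'hj).2.1 ≠ (l[i-1]'(by omega)).2.2) → False := by
    intro i j hij hj hcl hcond
    have hw' := walk_shortcut hw i j hij hj hcl hcond
    have hh' : hdC (l.take i ++ l.drop j) D = C := by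
      rw [hdC, List.head?_append, List.head?_take, List.head?_drop]
      rcases Nat.eq_zero_or_pos i with rfl | hi0
      · rw [if_pos rfl, List.getElem?_eq_getElem hj]
        simp only [Option.none_or, Option.map_some, Option.getD_some]
        rw [← hcl]
        exact hl0
      · rw [if_neg (by omega : ¬ i = 0)]
        rcases l with _ | ⟨s, t⟩
        · simp at hlpos
        · simpa [hdC] using hh
    have := hmin _ hw' hh'
    rw [List.length_append, List.length_take, List.length_drop] at this
    omega
  have noC : ∀ j (hj : j < l.length), 0 < j → (l[j]'hj).1 ≠ C := by
    intro j hj hj0 hEq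
    exact noShort 0 j hj0 hj (by rw [hl0, hEq]) (fun h => absurd h (by omega))
  have no3 : ∀ i j k (hij : i < j) (hjk : j < k) (hk : k < l.length),
      ¬ ((l[i]'(by omega)).1 = (l[j]'(by omega)).1 ∧
         (l[j]'(by omega)).1 = (l[k]'hk).1) := by
    rintro i j k hij hjk hk ⟨e1, e2⟩
    rcases Nat.eq_zero_or_pos i with rfl | hi0
    · exact noShort 0 j hij (by omega) e1 (fun h => absurd h (by omega))
    · by_cases hx : (l[j]'(by omega)).2.1 = (l[i-1]'(by omega)).2.2
      · by_cases hy : (l[k]'hk).2.1 = (l[i-1]'(by omega)).2.2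
        · obtain ⟨jj, rfl⟩ : ∃ jj, j = jj + 1 := ⟨j - 1, by omega⟩
          apply noShort (jj+1) k hjk hk e2
          intro _
          have hadj : Adj (l[jj]'(by omega)) (l[jj+1]'(by omega)) := by
            simpa using List.isChain_iff_getElem.mp hw.2.1 jj (by omega)
          have hgoal : (l[k]'hk).2.1 = (l[jj+1]'(by omega)).2.1 := by
            rw [hy, ← hx]
          simp only [Nat.add_sub_cancel]
          rw [hgoal]
          exact hadj.2
        · exact noShort i k (by omega) hk (e1.trans e2) (fun _ => hy)
      · exact noShort i j hij (by omega) e1 (fun _ => hx)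
  set L := l.map Prod.fst with hL
  have hLlen : L.length = l.length := by simp [hL]
  have hLget : ∀ i (hi : i < L.length), L[i]'hi = (l[i]'(by rw [← hLlen]; exact hi)).1 := by
    intro i hi
    simp [hL]
  have hcountD : L.count D = 0 := by
    rw [List.count_eq_zero]
    intro hmemD
    obtain ⟨⟨i, hi⟩, hg⟩ := List.mem_iff_get.mp hmemD
    simp only [List.get_eq_getElem] at hg
    rw [hLget i hi] at hg
    exact noD i (by omega) hg
  have hcountC : L.count C ≤ 1 := by
    by_contra hgt
    push_neg at hgt
    have hsub : List.Sublist (List.replicate 2 C) L :=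
      List.replicate_sublist_iff.mpr (by omega)
    obtain ⟨f, hf⟩ := List.sublist_iff_exists_fin_orderEmbedding_get_eq.mp hsub
    have hlen2 : (List.replicate 2 C).length = 2 := by simp
    have h01 : f ⟨0, by omega⟩ < f ⟨1, by omega⟩ :=
      f.strictMono (by exact Fin.mk_lt_mk.mpr (by omega))
    have hv1 : L.get (f ⟨1, by omega⟩) = C := by
      rw [← hf]; simp
    set j := (f ⟨1, by omega⟩ : Fin L.length) with hj
    have hjlt : (j : ℕ) < l.length := by rw [← hLlen]; exact j.isLt
    apply noC (j : ℕ) hjlt (by have := h01; omega)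
    rw [← hLget _ j.isLt]
    simpa using hv1
  have hcount2 : ∀ X, L.count X ≤ 2 := by
    intro X
    by_contra hgt
    push_neg at hgt
    have hsub : List.Sublist (List.replicate 3 X) L :=
      List.replicate_sublist_iff.mpr (by omega)
    obtain ⟨f, hf⟩ := List.sublist_iff_exists_fin_orderEmbedding_get_eq.mp hsub
    have h01 : f ⟨0, by simp⟩ < f ⟨1, by simp⟩ :=
      f.strictMono (by exact Fin.mk_lt_mk.mpr (by omega))
    have h12 : f ⟨1, by simp⟩ < f ⟨2, by simp⟩ :=
      f.strictMono (by exact Fin.mk_lt_mk.mpr (by omega))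
    have hv0 : L.get (f ⟨0, by simp⟩) = X := by rw [← hf]; simp
    have hv1 : L.get (f ⟨1, by simp⟩) = X := by rw [← hf]; simp
    have hv2 : L.get (f ⟨2, by simp⟩) = X := by rw [← hf]; simp
    set i0 := (f ⟨0, by simp⟩ : Fin L.length)
    set i1 := (f ⟨1, by simp⟩ : Fin L.length)
    set i2 := (f ⟨2, by simp⟩ : Fin L.length)
    have hk : (i2 : ℕ) < l.length := by rw [← hLlen]; exact i2.isLt
    apply no3 (i0 : ℕ) (i1 : ℕ) (i2 : ℕ) h01 h12 hk
    constructor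
    · rw [← hLget _ i0.isLt, ← hLget _ i1.isLt]
      simp only [List.get_eq_getElem] at hv0 hv1
      rw [hv0, hv1]
    · rw [← hLget _ i1.isLt, ← hLget _ i2.isLt]
      simp only [List.get_eq_getElem] at hv1 hv2
      rw [hv1, hv2]
  have hLS : ∀ x ∈ L, x ∈ S := by
    intro x hx
    obtain ⟨s, hs, rfl⟩ := List.mem_map.mp hx
    exact (hw.1 s hs).1
  have hsum : ∑ x ∈ S, L.count x = L.length := by
    have := Multiset.sum_count_eq_card (s := S) (m := (L : Multiset (Clause α)))
      (by simpa using hLS)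
    simpa using this
  have hDC : D ∈ S.erase C := Finset.mem_erase.mpr ⟨Ne.symm hne, hD⟩
  have hle : ∑ x ∈ S, L.count x ≤
      ∑ x ∈ S, (if x = C then 1 else if x = D then 0 else 2) := by
    apply Finset.sum_le_sum
    intro x _
    by_cases h1 : x = C
    · subst h1; simpa [if_pos rfl] using hcountC
    · by_cases h2 : x = D
      · subst h2; simp [if_neg h1, hcountD]
      · simpa [if_neg h1, if_neg h2] using hcount2 x
  have hsumf : ∑ x ∈ S, (if x = C then 1 else if x = D then 0 else 2) =
      2 * (n - 2) + 1 := by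
    rw [← Finset.sum_erase_add _ _ hC, ← Finset.sum_erase_add _ _ hDC]
    have hconst : ∀ x ∈ (S.erase C).erase D,
        (if x = C then 1 else if x = D then 0 else 2) = 2 := by
      intro x hx
      have h2 := (Finset.mem_erase.mp hx).1
      have h1 := (Finset.mem_erase.mp (Finset.mem_erase.mp hx).2).1
      simp [h1, h2]
    rw [Finset.sum_congr rfl hconst, Finset.sum_const, smul_eq_mul]
    have hcard : ((S.erase C).erase D).card = n - 2 := by
      rw [Finset.card_erase_of_mem hDC, Finset.card_erase_of_mem hC, hn]
      omega
    rw [hcard, if_neg (Ne.symm hne), if_pos rfl, if_pos rfl]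
    omega
  have hlenle : l.length ≤ 2 * (n - 2) + 1 := by
    rw [← hLlen, ← hsum, ← hsumf]
    exact hle
  refine ⟨l.length + 1, by omega, ?_⟩
  have hfinal := from_walk hw
  rw [hh] at hfinal
  exact hfinal
end

section
/- If there is an alternating path in a set S of propositional clauses from clause C to clause D, then there is an alternating path in S from C to D in which every clause of S occurs at most twice and in which the endpoint clauses C and D each occur exactly once. -/
section AP
variable {α : Type} [DecidableEq α] {S : Set (Clause α)}

def APath (S : Set (Clause α)) (Cs : List (Clause α)) (ps : List (Lit α × Lit α)) : Prop :=
  Cs ≠ [] ∧ ps.length + 1 = Cs.length ∧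
  (∀ C ∈ Cs, C ∈ S) ∧
  (∀ i, ∀ h : i < ps.length, ∀ h2 : i + 1 < Cs.length,
    (ps[i]).1 ∈ Cs[i]'(by omega) ∧ (ps[i]).2 ∈ Cs[i+1] ∧ (ps[i]).2 = Lit.compl (ps[i]).1) ∧
  (∀ i, ∀ h : i + 1 < ps.length, (ps[i+1]).1 ≠ (ps[i]'(by omega)).2)

theorem isAltPath_iff {Cs : List (Clause α)} {ps : List (Lit α × Lit α)} :
    IsAltPath S Cs ps ↔ APath S Cs ps := by
  unfold IsAltPath APath
  refine and_congr_right fun hne => and_congr_right fun hlen => and_congr_right fun hmem => ?_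
  constructor
  · rintro ⟨h4, h5⟩
    refine ⟨fun i h h2 => ?_, fun i h => h5 i h⟩
    have := h4 i h
    rwa [List.getD_eq_getElem _ _ (by omega), List.getD_eq_getElem _ _ h2, List.get_eq_getElem] at this
  · rintro ⟨h4, h5⟩
    refine ⟨fun i h => ?_, fun i h => h5 i h⟩
    have := h4 i h (by omega)
    rwa [List.getD_eq_getElem _ _ (by omega), List.getD_eq_getElem _ _ (by omega), List.get_eq_getElem]

theorem aPath_drop {Cs : List (Clause α)} {ps : List (Lit α × Lit α)}
    (h : APath S Cs ps) (j : ℕ) (hj : j < Cs.length) :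
    APath S (Cs.drop j) (ps.drop j) := by
  obtain ⟨hne, hlen, hmem, hlink, halt⟩ := h
  refine ⟨?_, ?_, fun C hC => hmem C (List.mem_of_mem_drop hC), fun i h h2 => ?_, fun i h => ?_⟩
  · have : 0 < (Cs.drop j).length := by simp; omega
    exact List.ne_nil_of_length_pos this
  · simp only [List.length_drop]; omega
  · simp only [List.length_drop] at h h2
    simp only [List.getElem_drop]
    exact hlink (j + i) (by omega) (by omega)
  · simp only [List.length_drop] at h
    simp only [List.getElem_drop]
    exact halt (j + i) (by omega)

theorem aPath_take {Cs : List (Clause α)} {ps : List (Lit α × Lit α)}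
    (h : APath S Cs ps) (i : ℕ) (hi : i < Cs.length) :
    APath S (Cs.take (i+1)) (ps.take i) := by
  obtain ⟨hne, hlen, hmem, hlink, halt⟩ := h
  refine ⟨?_, ?_, fun C hC => hmem C (List.mem_of_mem_take hC), fun t h h2 => ?_, fun t h => ?_⟩
  · have : 0 < (Cs.take (i+1)).length := by simp; omega
    exact List.ne_nil_of_length_pos this
  · simp only [List.length_take]; omega
  · simp only [List.length_take] at h h2
    simp only [List.getElem_take]
    exact hlink t (by omega) (by omega)
  · simp only [List.length_take] at h
    simp only [List.getElem_take]
    exact halt t (by omega)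

theorem gei {β : Type} (l : List β) {x y : ℕ} (h : x = y) {hx : x < l.length} :
    l[x]'hx = l[y]'(h ▸ hx) := by subst h; rfl

set_option linter.unusedSectionVars false
set_option maxHeartbeats 1000000

theorem aPath_splice {Cs : List (Clause α)} {ps : List (Lit α × Lit α)}
    (h : APath S Cs ps) (i j : ℕ) (hij : i < j) (hj : j < ps.length)
    (hiC : i < Cs.length) (hjC : j < Cs.length) (heq : Cs[i] = Cs[j])
    (hne : i = 0 ∨ (ps[j]'hj).1 ≠ (ps[i-1]'(by omega)).2) :
    APath S (Cs.take (i+1) ++ Cs.drop (j+1)) (ps.take i ++ ps.drop j) := by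
  obtain ⟨hne0, hlen, hmem, hlink, halt⟩ := h
  have hn : j + 1 < Cs.length := by omega
  have hlt : (ps.take i).length = i := by simp; omega
  have hlct : (Cs.take (i+1)).length = i + 1 := by simp; omega
  have hld : (ps.drop j).length = ps.length - j := by simp
  have hlcd : (Cs.drop (j+1)).length = Cs.length - (j+1) := by simp
  -- getElem computations
  have hps : ∀ t (ht : t < (ps.take i ++ ps.drop j).length),
      (ps.take i ++ ps.drop j)[t] =
        if h' : t < i then ps[t]'(by omega) else ps[j + (t - i)]'(by simp [hlt, hld] at ht; omega) := by
    intro t ht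
    split_ifs with h'
    · rw [List.getElem_append_left (by omega), List.getElem_take]
    · rw [List.getElem_append_right (by omega)]
      simp only [List.getElem_drop, hlt]
  have hcs : ∀ t (ht : t < (Cs.take (i+1) ++ Cs.drop (j+1)).length),
      (Cs.take (i+1) ++ Cs.drop (j+1))[t] =
        if h' : t < i + 1 then Cs[t]'(by omega) else Cs[j + (t - i)]'(by simp [hlct, hlcd] at ht; omega) := by
    intro t ht
    split_ifs with h'
    · rw [List.getElem_append_left (by omega), List.getElem_take]
    · rw [List.getElem_append_right (by omega)]
      rw [List.getElem_drop]
      exact gei _ (by omega)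
  refine ⟨?_, ?_, ?_, fun t ht ht2 => ?_, fun t ht => ?_⟩
  · have : 0 < (Cs.take (i+1) ++ Cs.drop (j+1)).length := by simp; omega
    exact List.ne_nil_of_length_pos this
  · simp; omega
  · intro E hE
    rcases List.mem_append.mp hE with h' | h'
    · exact hmem E (List.mem_of_mem_take h')
    · exact hmem E (List.mem_of_mem_drop h')
  · -- link condition
    have hlt' : t < i + (ps.length - j) := by
      simpa [hlt, hld] using ht
    rw [hps t ht, hcs t (by omega), hcs (t+1) (by omega)]
    rcases Nat.lt_trichotomy t i with h' | h' | h'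
    · rw [dif_pos h', dif_pos (show t < i + 1 by omega), dif_pos (show t + 1 < i + 1 by omega)]
      exact hlink t (by omega) (by omega)
    · rw [dif_neg (show ¬ t < i by omega), dif_pos (show t < i + 1 by omega),
        dif_neg (show ¬ t + 1 < i + 1 by omega)]
      have hl := hlink j hj (by omega)
      refine ⟨?_, ?_, ?_⟩
      · rw [gei ps (show j + (t - i) = j by omega), gei Cs h', heq]
        exact hl.1
      · rw [gei ps (show j + (t - i) = j by omega), gei Cs (show j + (t + 1 - i) = j + 1 by omega)]
        exact hl.2.1
      · rw [gei ps (show j + (t - i) = j by omega)]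
        exact hl.2.2
    · rw [dif_neg (show ¬ t < i by omega), dif_neg (show ¬ t < i + 1 by omega),
        dif_neg (show ¬ t + 1 < i + 1 by omega)]
      have h4 := hlink (j + (t - i)) (by omega) (by omega)
      refine ⟨h4.1, ?_, h4.2.2⟩
      rw [gei Cs (show j + (t + 1 - i) = (j + (t - i)) + 1 by omega)]
      exact h4.2.1
  · -- alternation condition
    have hlt' : t + 1 < i + (ps.length - j) := by
      simpa [hlt, hld] using ht
    have hb : t + 1 < (List.take i ps ++ List.drop j ps).length := by
      simp only [List.length_append, hlt, hld]; omega
    rw [hps t (by omega), hps (t+1) hb]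
    rcases Nat.lt_trichotomy (t+1) i with h' | h' | h'
    · rw [dif_pos h', dif_pos (show t < i by omega)]
      exact halt t (by omega)
    · rw [dif_neg (show ¬ t + 1 < i by omega), dif_pos (show t < i by omega)]
      rcases hne with h0 | hne
      · omega
      · rw [gei ps (show j + (t + 1 - i) = j by omega), gei ps (show t = i - 1 by omega)]
        exact hne
    · rw [dif_neg (show ¬ t + 1 < i by omega), dif_neg (show ¬ t < i by omega)]
      rw [gei ps (show j + (t + 1 - i) = (j + (t - i)) + 1 by omega)]
      exact halt (j + (t - i)) (by omega)

theorem occ_of_count {β : Type} [DecidableEq β] {l : List β} {E : β} {k : ℕ}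
    (h : k ≤ l.count E) :
    ∃ f : Fin k → ℕ, StrictMono f ∧ ∀ i, ∃ hf : f i < l.length, l[f i] = E := by
  rw [← List.replicate_sublist_iff] at h
  obtain ⟨f, hf⟩ := List.sublist_iff_exists_fin_orderEmbedding_get_eq.mp h
  refine ⟨fun i => (f (Fin.cast (by simp) i)).1, ?_, fun i => ⟨(f _).2, ?_⟩⟩
  · intro x y hxy
    exact f.strictMono (by simpa using hxy)
  · have := hf (Fin.cast (by simp) i)
    rw [List.get_eq_getElem, List.getElem_replicate] at this
    rw [List.get_eq_getElem] at this
    exact this.symm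

theorem head_getElem {β : Type} {l : List β} {C : β} (h : l.head? = some C) :
    ∃ h0 : 0 < l.length, l[0] = C := by
  have hne : l ≠ [] := by rintro rfl; simp at h
  have h0 : 0 < l.length := List.length_pos_iff.mpr hne
  refine ⟨h0, ?_⟩
  rw [List.head?_eq_getElem?, List.getElem?_eq_getElem h0] at h
  exact Option.some_injective _ h

theorem getLast_getElem {β : Type} {l : List β} {D : β} (h : l.getLast? = some D) :
    ∃ h0 : l.length - 1 < l.length, l[l.length - 1] = D := by
  have hne : l ≠ [] := by rintro rfl; simp at h
  have h0 : l.length - 1 < l.length := by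
    have := List.length_pos_iff.mpr hne; omega
  refine ⟨h0, ?_⟩
  rw [List.getLast?_eq_getElem?, List.getElem?_eq_getElem h0] at h
  exact Option.some_injective _ h

theorem aPath_main (S : Set (Clause α)) (C D : Clause α) :
    ∀ n : ℕ, ∀ Cs ps, Cs.length = n → APath S Cs ps →
      Cs.head? = some C → Cs.getLast? = some D →
    ∃ Cs' ps', APath S Cs' ps' ∧ Cs'.head? = some C ∧ Cs'.getLast? = some D ∧
      (∀ E : Clause α, Cs'.count E ≤ 2) ∧ Cs'.count C = 1 ∧ Cs'.count D = 1 := by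
  intro n
  induction n using Nat.strong_induction_on with
  | _ n IH =>
  intro Cs ps hn hp hh hl
  obtain ⟨hC0pos, hC0⟩ := head_getElem hh
  obtain ⟨hDpos, hDlast⟩ := getLast_getElem hl
  have hlen : ps.length + 1 = Cs.length := hp.2.1
  by_cases h1 : ∃ a, ∃ ha : a < Cs.length, 0 < a ∧ Cs[a] = C
  · obtain ⟨a, ha, ha0, hac⟩ := h1
    refine IH (Cs.drop a).length (by simp; omega) _ _ rfl (aPath_drop hp a ha) ?_ ?_
    · rw [List.head?_eq_getElem?, List.getElem?_eq_getElem (by simp; omega)]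
      simp only [List.getElem_drop]
      exact congrArg some hac
    · rw [List.getLast?_drop, if_neg (by omega)]
      exact hl
  by_cases h2 : ∃ a, ∃ ha : a < Cs.length, a + 1 < Cs.length ∧ Cs[a] = D
  · obtain ⟨a, ha, ha1, had⟩ := h2
    refine IH (Cs.take (a+1)).length (by simp; omega) _ _ rfl (aPath_take hp a ha) ?_ ?_
    · rw [List.head?_take, if_neg (by omega)]
      exact hh
    · have hlt : (Cs.take (a+1)).length = a + 1 := by simp; omega
      rw [List.getLast?_eq_getElem?, List.getElem?_eq_getElem (by omega : (Cs.take (a+1)).length - 1 < (Cs.take (a+1)).length)]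
      rw [gei _ (by rw [hlt] : (Cs.take (a+1)).length - 1 = a + 1 - 1)]
      rw [List.getElem_take]
      exact congrArg some had
  by_cases h3 : ∃ a b c, ∃ hab : a < b, ∃ hbc : b < c, ∃ hc : c < Cs.length,
      Cs[a]'(by omega) = Cs[b]'(by omega) ∧ Cs[b]'(by omega) = Cs[c]
  · obtain ⟨a, b, c, hab, hbc, hc, hE1, hE2⟩ := h3
    have ha1 : 1 ≤ a := by
      by_contra h0
      exact h1 ⟨b, by omega, by omega, by
        rw [← hE1, gei Cs (by omega : a = 0)]; exact hC0⟩
    have hc2 : c + 1 < Cs.length := by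
      by_contra hcl
      exact h2 ⟨b, by omega, by omega, by
        rw [hE2, gei Cs (by omega : c = Cs.length - 1)]; exact hDlast⟩
    have hbp : b < ps.length := by omega
    have hcp : c < ps.length := by omega
    have hap : a - 1 < ps.length := by omega
    -- the shortened path will be handled uniformly
    have key : ∀ i j, ∀ hij : i < j, ∀ hjp : j < ps.length, ∀ hic : i < Cs.length,
        ∀ hjc : j < Cs.length, Cs[i] = Cs[j] →
        (i = 0 ∨ (ps[j]'hjp).1 ≠ (ps[i-1]'(by omega)).2) → 1 ≤ i →
        ∃ Cs' ps', APath S Cs' ps' ∧ Cs'.head? = some C ∧ Cs'.getLast? = some D ∧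
          (∀ E : Clause α, Cs'.count E ≤ 2) ∧ Cs'.count C = 1 ∧ Cs'.count D = 1 := by
      intro i j hij hjp hic hjc heq hne hi1
      have hsp := aPath_splice hp i j hij hjp hic hjc heq hne
      refine IH (Cs.take (i+1) ++ Cs.drop (j+1)).length (by simp; omega) _ _ rfl hsp ?_ ?_
      · rw [List.head?_eq_getElem?, List.getElem?_eq_getElem (by simp; omega)]
        rw [List.getElem_append_left (by simp; omega), List.getElem_take]
        exact congrArg some hC0
      · rw [List.getLast?_append]
        rw [List.getLast?_drop, if_neg (by omega)]
        rw [hl]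
        rfl
    by_cases hA : (ps[b]'hbp).1 ≠ (ps[a-1]'hap).2
    · exact key a b hab hbp (by omega) (by omega) hE1 (Or.inr hA) ha1
    by_cases hB : (ps[c]'hcp).1 ≠ (ps[a-1]'hap).2
    · exact key a c (by omega) hcp (by omega) (by omega) (hE1.trans hE2) (Or.inr hB) ha1
    push_neg at hA hB
    have halt := hp.2.2.2.2
    have hb1 : b - 1 + 1 < ps.length := by omega
    have hbalt : (ps[b]'hbp).1 ≠ (ps[b-1]'(by omega)).2 := by
      have := halt (b-1) hb1
      rwa [gei ps (by omega : b - 1 + 1 = b)] at this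
    refine key b c hbc hcp (by omega) (by omega) hE2 (Or.inr ?_) (by omega)
    rw [hB, ← hA]
    exact hbalt
  -- no shortcut possible: counts are small
  refine ⟨Cs, ps, hp, hh, hl, ?_, ?_, ?_⟩
  · intro E
    by_contra hcnt
    push_neg at hcnt
    obtain ⟨f, hmono, hocc⟩ := occ_of_count (l := Cs) (E := E) (by omega : 3 ≤ Cs.count E)
    obtain ⟨h0, e0⟩ := hocc 0
    obtain ⟨hb, e1⟩ := hocc 1
    obtain ⟨hcc, e2⟩ := hocc 2
    exact h3 ⟨f 0, f 1, f 2, hmono (by decide), hmono (by decide), hcc,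
      e0.trans e1.symm, e1.trans e2.symm⟩
  · have hle : Cs.count C ≤ 1 := by
      by_contra hcnt
      push_neg at hcnt
      obtain ⟨f, hmono, hocc⟩ := occ_of_count (l := Cs) (E := C) (by omega : 2 ≤ Cs.count C)
      obtain ⟨h0, e0⟩ := hocc 0
      obtain ⟨hb, e1⟩ := hocc 1
      have : (0 : ℕ) ≤ f 0 := Nat.zero_le _
      exact h1 ⟨f 1, hb, by have := hmono (show (0:Fin 2) < 1 by decide); omega, e1⟩
    have hge : 0 < Cs.count C := by
      rw [List.count_pos_iff]
      rw [← hC0]; exact List.getElem_mem _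
    omega
  · have hle : Cs.count D ≤ 1 := by
      by_contra hcnt
      push_neg at hcnt
      obtain ⟨f, hmono, hocc⟩ := occ_of_count (l := Cs) (E := D) (by omega : 2 ≤ Cs.count D)
      obtain ⟨h0, e0⟩ := hocc 0
      obtain ⟨hb, e1⟩ := hocc 1
      have hlt : f 0 < f 1 := hmono (show (0:Fin 2) < 1 by decide)
      exact h2 ⟨f 0, by omega, by omega, e0⟩
    have hge : 0 < Cs.count D := by
      rw [List.count_pos_iff]
      rw [← hDlast]; exact List.getElem_mem _
    omega


end AP

/-- If there is an alternating path in `S` from `C` to `D`, then there is one in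
which every clause occurs at most twice and the endpoints `C` and `D` each occur
exactly once. -/
theorem stmt_1 {α : Type} [DecidableEq α] (S : Set (Clause α)) (C D : Clause α)
    (h : ∃ Cs ps, IsAltPath S Cs ps ∧ Cs.head? = some C ∧ Cs.getLast? = some D) :
    ∃ Cs ps, IsAltPath S Cs ps ∧ Cs.head? = some C ∧ Cs.getLast? = some D ∧
      (∀ E : Clause α, Cs.count E ≤ 2) ∧ Cs.count C = 1 ∧ Cs.count D = 1 := by
  obtain ⟨Cs, ps, hp, hh, hl⟩ := h
  obtain ⟨Cs', ps', hp', hh', hl', hcnt, hC, hD⟩ :=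
    aPath_main S C D Cs.length Cs ps rfl (isAltPath_iff.mp hp) hh hl
  exact ⟨Cs', ps', isAltPath_iff.mpr hp', hh', hl', hcnt, hC, hD⟩
end

section
/- If S is a minimal unsatisfiable set of propositional clauses, then S is relevance connected. -/
namespace Stmt2Aux
set_option linter.unusedSectionVars false
set_option maxHeartbeats 1000000
variable {α : Type} [DecidableEq α]

theorem compl_compl (L : Lit α) : L.compl.compl = L := by
  cases L with | mk a s => simp [Lit.compl]

theorem satLit_compl_iff {v : α → Bool} {L : Lit α} : SatLit v L.compl ↔ ¬ SatLit v L := by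
  cases L with | mk a s => cases s <;> cases h : v a <;> simp [SatLit, Lit.compl, h]

/-- Resolution derivations, tracking the exact set of leaves used. -/
inductive Der : Set (Clause α) → Clause α → Prop where
  | leaf (C : Clause α) : Der {C} C
  | res {T₁ T₂ : Set (Clause α)} {R₁ R₂ : Clause α} (L : Lit α)
      (h₁ : Der T₁ R₁) (h₂ : Der T₂ R₂) (hL₁ : L ∈ R₁) (hL₂ : Lit.compl L ∈ R₂) :
      Der (T₁ ∪ T₂) ((R₁.erase L) ∪ (R₂.erase (Lit.compl L)))

theorem Der.sound {T : Set (Clause α)} {R : Clause α} (h : Der T R) :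
    ∀ v, SatSet v T → SatClause v R := by
  induction h with
  | leaf C => exact fun v hv => hv C rfl
  | res L h₁ h₂ hL₁ hL₂ ih₁ ih₂ =>
    intro v hv
    obtain ⟨K₁, hK₁, hs₁⟩ := ih₁ v (fun C hC => hv C (Set.mem_union_left _ hC))
    obtain ⟨K₂, hK₂, hs₂⟩ := ih₂ v (fun C hC => hv C (Set.mem_union_right _ hC))
    by_cases e₁ : K₁ = L
    · by_cases e₂ : K₂ = Lit.compl L
      · exfalso
        rw [e₂] at hs₂; rw [e₁] at hs₁
        exact (satLit_compl_iff.1 hs₂) hs₁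
      · exact ⟨K₂, Finset.mem_union_right _ (Finset.mem_erase.2 ⟨e₂, hK₂⟩), hs₂⟩
    · exact ⟨K₁, Finset.mem_union_left _ (Finset.mem_erase.2 ⟨e₁, hK₁⟩), hs₁⟩

/-- A minimal unsatisfiable set is finite (compactness). -/
theorem mu_finite {S : Set (Clause α)} (h : MinimalUnsat S) : S.Finite := by
  by_contra hinf
  have hcs : CompactSpace (α → Bool) := by infer_instance
  set Z : S → Set (α → Bool) := fun C => {v | SatClause v (C : Clause α)} with hZ
  have hclosed : ∀ C : S, IsClosed (Z C) := by
    intro C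
    have : Z C = ⋃ L ∈ (C : Clause α), {v : α → Bool | v L.1 = L.2} := by
      ext v; simp [hZ, SatClause, SatLit]
    rw [this]
    exact Set.Finite.isClosed_biUnion (C : Clause α).finite_toSet
      (fun L _ => IsClosed.preimage (continuous_apply L.1) isClosed_singleton)
  have hempty : (Set.univ : Set (α → Bool)) ∩ ⋂ C : S, Z C = ∅ := by
    by_contra hne
    obtain ⟨v, hv⟩ := Set.nonempty_iff_ne_empty.2 hne
    refine h.1 ⟨v, fun C hC => ?_⟩
    have := hv.2
    simp only [Set.mem_iInter] at this
    exact this ⟨C, hC⟩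
  obtain ⟨u, hu⟩ := IsCompact.elim_finite_subfamily_closed isCompact_univ Z hclosed hempty
  set T : Set (Clause α) := (fun C : S => (C : Clause α)) '' ↑u with hT
  have hTfin : T.Finite := (u.finite_toSet).image _
  have hTS : T ⊆ S := by rintro C ⟨⟨C', hC'⟩, _, rfl⟩; exact hC'
  have hTne : T ≠ S := fun he => hinf (he ▸ hTfin)
  obtain ⟨v, hv⟩ := h.2 T (ssubset_of_subset_of_ne hTS hTne)
  have : v ∈ (Set.univ : Set (α → Bool)) ∩ ⋂ C ∈ u, Z C := by
    refine ⟨trivial, ?_⟩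
    simp only [Set.mem_iInter]
    intro C hC
    exact hv (C : Clause α) ⟨C, hC, rfl⟩
  rw [hu] at this
  exact this


/-- Lifting lemma: a derivation from the `(a,b)`-reduced clauses lifts to a derivation
from the original clauses, whose conclusion only gains at most the literal `(a,!b)`. -/
theorem Der.lift (Sf : Finset (Clause α)) (a : α) (b : Bool) :
    ∀ {T' : Set (Clause α)} {R' : Clause α}, Der T' R' →
    (∀ C' ∈ T', ∃ C ∈ Sf, (a, b) ∉ C ∧ C' = C.erase (a, !b)) →
    ∃ T ⊆ (↑Sf : Set (Clause α)), ∃ R, Der T R ∧ R' ⊆ R ∧ R ⊆ insert (a, !b) R' := by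
  intro T' R' h
  induction h with
  | leaf C' =>
    intro hT
    obtain ⟨C, hCS, hab, hC⟩ := hT C' rfl
    refine ⟨{C}, by simpa using hCS, C, Der.leaf C, ?_, ?_⟩
    · rw [hC]; exact Finset.erase_subset _ _
    · intro K hK
      rcases eq_or_ne K (a, !b) with rfl | hne
      · exact Finset.mem_insert_self _ _
      · exact Finset.mem_insert_of_mem (hC ▸ Finset.mem_erase.2 ⟨hne, hK⟩)
  | res L h₁ h₂ hL₁ hL₂ ih₁ ih₂ =>
    intro hT
    obtain ⟨T₁, hT₁S, R₁, hd₁, hlo₁, hhi₁⟩ := ih₁ (fun C' hC' => hT C' (Set.mem_union_left _ hC'))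
    obtain ⟨T₂, hT₂S, R₂, hd₂, hlo₂, hhi₂⟩ := ih₂ (fun C' hC' => hT C' (Set.mem_union_right _ hC'))
    refine ⟨T₁ ∪ T₂, Set.union_subset hT₁S hT₂S, _,
      Der.res L hd₁ hd₂ (hlo₁ hL₁) (hlo₂ hL₂), ?_, ?_⟩
    · intro K hK
      rcases Finset.mem_union.1 hK with hK | hK
      · obtain ⟨hne, hKm⟩ := Finset.mem_erase.1 hK
        exact Finset.mem_union_left _ (Finset.mem_erase.2 ⟨hne, hlo₁ hKm⟩)
      · obtain ⟨hne, hKm⟩ := Finset.mem_erase.1 hK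
        exact Finset.mem_union_right _ (Finset.mem_erase.2 ⟨hne, hlo₂ hKm⟩)
    · intro K hK
      rcases Finset.mem_union.1 hK with hK | hK
      · obtain ⟨hne, hKm⟩ := Finset.mem_erase.1 hK
        rcases Finset.mem_insert.1 (hhi₁ hKm) with rfl | hKm'
        · exact Finset.mem_insert_self _ _
        · exact Finset.mem_insert_of_mem
            (Finset.mem_union_left _ (Finset.mem_erase.2 ⟨hne, hKm'⟩))
      · obtain ⟨hne, hKm⟩ := Finset.mem_erase.1 hK
        rcases Finset.mem_insert.1 (hhi₂ hKm) with rfl | hKm'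
        · exact Finset.mem_insert_self _ _
        · exact Finset.mem_insert_of_mem
            (Finset.mem_union_right _ (Finset.mem_erase.2 ⟨hne, hKm'⟩))

/-- Atoms occurring in a finite clause set. -/
def atomsOf (Sf : Finset (Clause α)) : Finset α := Sf.biUnion (fun C => C.image Prod.fst)

theorem complete : ∀ (n : ℕ) (Sf : Finset (Clause α)), (atomsOf Sf).card ≤ n →
    ¬ Satisfiable (↑Sf : Set (Clause α)) →
    ∃ T ⊆ (↑Sf : Set (Clause α)), Der T (∅ : Clause α) := by
  intro n
  induction n with
  | zero =>
    intro Sf hcard hunsat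
    -- all clauses are empty
    have hmem : (∅ : Clause α) ∈ Sf := by
      by_contra hne
      refine hunsat ⟨fun _ => true, fun C hC => ?_⟩
      have hCne : C ≠ ∅ := fun he => hne (he ▸ hC)
      obtain ⟨L, hL⟩ := Finset.nonempty_iff_ne_empty.2 hCne
      exfalso
      have : L.1 ∈ atomsOf Sf :=
        Finset.mem_biUnion.2 ⟨C, hC, Finset.mem_image.2 ⟨L, hL, rfl⟩⟩
      have := Finset.card_pos.2 ⟨L.1, this⟩
      omega
    exact ⟨{∅}, by simpa using hmem, Der.leaf ∅⟩
  | succ n ih =>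
    intro Sf hcard hunsat
    rcases Nat.eq_zero_or_pos (atomsOf Sf).card with hz | hpos
    · -- same as base case
      have hmem : (∅ : Clause α) ∈ Sf := by
        by_contra hne
        refine hunsat ⟨fun _ => true, fun C hC => ?_⟩
        have hCne : C ≠ ∅ := fun he => hne (he ▸ hC)
        obtain ⟨L, hL⟩ := Finset.nonempty_iff_ne_empty.2 hCne
        exfalso
        have : L.1 ∈ atomsOf Sf :=
          Finset.mem_biUnion.2 ⟨C, hC, Finset.mem_image.2 ⟨L, hL, rfl⟩⟩
        have := Finset.card_pos.2 ⟨L.1, this⟩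
        omega
      exact ⟨{∅}, by simpa using hmem, Der.leaf ∅⟩
    · obtain ⟨a, ha⟩ := Finset.card_pos.1 hpos
      -- the two reduced clause sets
      set red : Bool → Finset (Clause α) :=
        fun b => (Sf.filter (fun C => (a, b) ∉ C)).image (fun C => C.erase (a, !b)) with hred
      have hredUnsat : ∀ b, ¬ Satisfiable (↑(red b) : Set (Clause α)) := by
        intro b ⟨v, hv⟩
        refine hunsat ⟨Function.update v a b, fun C hC => ?_⟩
        by_cases hab : (a, b) ∈ C
        · exact ⟨(a, b), hab, by simp [SatLit]⟩
        · have hC' : C.erase (a, !b) ∈ red b :=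
            Finset.mem_image.2 ⟨C, Finset.mem_filter.2 ⟨hC, hab⟩, rfl⟩
          obtain ⟨K, hK, hsK⟩ := hv _ hC'
          obtain ⟨hKne, hKC⟩ := Finset.mem_erase.1 hK
          have hKa : K.1 ≠ a := by
            intro he
            rcases Bool.eq_false_or_eq_true K.2 with h2 | h2 <;>
            · have : K = (a, K.2) := by rw [← he]
              cases b <;> rcases K with ⟨x, s⟩ <;> simp_all <;> simp_all
          refine ⟨K, hKC, ?_⟩
          unfold SatLit at hsK ⊢
          rwa [Function.update_of_ne hKa]
      have hredAtoms : ∀ b, atomsOf (red b) ⊆ (atomsOf Sf).erase a := by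
        intro b x hx
        obtain ⟨C', hC', hx'⟩ := Finset.mem_biUnion.1 hx
        obtain ⟨K, hK, rfl⟩ := Finset.mem_image.1 hx'
        obtain ⟨C, hC, rfl⟩ := Finset.mem_image.1 hC'
        obtain ⟨hCS, hab⟩ := Finset.mem_filter.1 hC
        obtain ⟨hKne, hKC⟩ := Finset.mem_erase.1 hK
        refine Finset.mem_erase.2 ⟨?_, Finset.mem_biUnion.2 ⟨C, hCS, Finset.mem_image.2 ⟨K, hKC, rfl⟩⟩⟩
        intro he
        rcases K with ⟨x, s⟩
        simp only at he
        subst he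
        cases s <;> cases b <;> simp_all
      have hredCard : ∀ b, (atomsOf (red b)).card ≤ n := by
        intro b
        have h1 := Finset.card_le_card (hredAtoms b)
        have h2 := Finset.card_erase_of_mem ha
        omega
      obtain ⟨Tt, hTt, hdt⟩ := ih (red true) (hredCard true) (hredUnsat true)
      obtain ⟨Tf, hTf, hdf⟩ := ih (red false) (hredCard false) (hredUnsat false)
      have hliftmem : ∀ b, ∀ T' ⊆ (↑(red b) : Set (Clause α)), ∀ C' ∈ T',
          ∃ C ∈ Sf, (a, b) ∉ C ∧ C' = C.erase (a, !b) := by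
        intro b T' hT' C' hC'
        obtain ⟨C, hC, rfl⟩ := Finset.mem_image.1 (hT' hC')
        obtain ⟨hCS, hab⟩ := Finset.mem_filter.1 hC
        exact ⟨C, hCS, hab, rfl⟩
      obtain ⟨T₁, hT₁S, R₁, hd₁, _, hhi₁⟩ := Der.lift Sf a true hdt (hliftmem true Tt hTt)
      obtain ⟨T₂, hT₂S, R₂, hd₂, _, hhi₂⟩ := Der.lift Sf a false hdf (hliftmem false Tf hTf)
      have hhi₁' : R₁ ⊆ {((a, false) : Lit α)} := by
        intro K hK
        rcases Finset.mem_insert.1 (hhi₁ hK) with rfl | hc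
        · simp
        · exact absurd hc (Finset.notMem_empty _)
      have hhi₂' : R₂ ⊆ {((a, true) : Lit α)} := by
        intro K hK
        rcases Finset.mem_insert.1 (hhi₂ hK) with rfl | hc
        · simp
        · exact absurd hc (Finset.notMem_empty _)
      rcases Finset.subset_singleton_iff.1 hhi₁' with h1 | h1
      · exact ⟨T₁, hT₁S, h1 ▸ hd₁⟩
      rcases Finset.subset_singleton_iff.1 hhi₂' with h2 | h2
      · exact ⟨T₂, hT₂S, h2 ▸ hd₂⟩
      -- resolve the two unit clauses on (a,true)/(a,false)
      refine ⟨T₂ ∪ T₁, Set.union_subset hT₂S hT₁S, ?_⟩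
      have hc : Lit.compl ((a, true) : Lit α) = (a, false) := by simp [Lit.compl]
      have hres := Der.res ((a, true) : Lit α) hd₂ hd₁
        (by rw [h2]; exact Finset.mem_singleton_self _)
        (by rw [hc, h1]; exact Finset.mem_singleton_self _)
      have he : (R₂.erase (a, true)) ∪ (R₁.erase (Lit.compl (a, true))) = (∅ : Clause α) := by
        rw [hc, h1, h2]
        simp
      rwa [he] at hres


/-- `APath T C x m D`: an alternating path (length ≥ 2) through clauses of `T`
from `C` to `D`, with first exit literal `x ∈ C` and last entrance literal `m ∈ D`. -/
inductive APath (T : Set (Clause α)) : Clause α → Lit α → Lit α → Clause α → Prop where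
  | base {C D : Clause α} {L : Lit α} (hC : C ∈ T) (hD : D ∈ T)
      (h₁ : L ∈ C) (h₂ : Lit.compl L ∈ D) : APath T C L (Lit.compl L) D
  | snoc {C D D' : Clause α} {x m L : Lit α} (p : APath T C x m D)
      (h₁ : L ∈ D) (h₂ : L ≠ m) (h₃ : Lit.compl L ∈ D') (hD' : D' ∈ T) :
      APath T C x (Lit.compl L) D'

namespace APath

theorem mono {T T' : Set (Clause α)} {C D : Clause α} {x m : Lit α}
    (hT : T ⊆ T') (p : APath T C x m D) : APath T' C x m D := by
  induction p with
  | base hC hD h₁ h₂ => exact base (hT hC) (hT hD) h₁ h₂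
  | snoc p h₁ h₂ h₃ hD' ih => exact snoc ih h₁ h₂ h₃ (hT hD')

theorem mem_right {T : Set (Clause α)} {C D : Clause α} {x m : Lit α}
    (p : APath T C x m D) : D ∈ T := by
  cases p with
  | base hC hD h₁ h₂ => exact hD
  | snoc p h₁ h₂ h₃ hD' => exact hD'

theorem trans {T : Set (Clause α)} {C D F : Clause α} {x m y m' : Lit α}
    (p : APath T C x m D) (q : APath T D y m' F) (hym : y ≠ m) :
    APath T C x m' F := by
  induction q with
  | base hC hD h₁ h₂ => exact snoc p h₁ hym h₂ hD
  | snoc q h₁ h₂ h₃ hD' ih => exact snoc (ih hym) h₁ h₂ h₃ hD'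

theorem reverse {T : Set (Clause α)} {C D : Clause α} {x m : Lit α}
    (p : APath T C x m D) : APath T D m x C := by
  induction p with
  | base hC hD h₁ h₂ =>
    have h := base hD hC h₂ (by rwa [compl_compl])
    rwa [compl_compl] at h
  | snoc p h₁ h₂ h₃ hD' ih =>
    have hlink := base hD' p.mem_right h₃ (by rwa [compl_compl])
    rw [compl_compl] at hlink
    exact hlink.trans ih (fun he => h₂ he.symm)

end APath

/-- From `E` one can reach a clause containing `K`, without entering it at `K`. -/
def Out (T : Set (Clause α)) (E : Clause α) (K : Lit α) : Prop :=
  ∃ G ∈ T, K ∈ G ∧ (G = E ∨ ∃ x m, APath T E x m G ∧ m ≠ K)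

/-- There are clauses `G ∋ A`, `G' ∋ B` joined by a path not exiting `G` at `A`
and not entering `G'` at `B` (or a single clause containing both). -/
def Port (T : Set (Clause α)) (A B : Lit α) : Prop :=
  ∃ G ∈ T, ∃ G' ∈ T, A ∈ G ∧ B ∈ G' ∧
    (G = G' ∨ ∃ x m, APath T G x m G' ∧ x ≠ A ∧ m ≠ B)

def Conn (T : Set (Clause α)) (E F : Clause α) : Prop :=
  E = F ∨ ∃ x m, APath T E x m F

theorem Out.mono {T T' : Set (Clause α)} {E : Clause α} {K : Lit α}
    (hT : T ⊆ T') (h : Out T E K) : Out T' E K := by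
  obtain ⟨G, hG, hKG, hc⟩ := h
  refine ⟨G, hT hG, hKG, ?_⟩
  rcases hc with rfl | ⟨x, m, p, hm⟩
  · exact Or.inl rfl
  · exact Or.inr ⟨x, m, p.mono hT, hm⟩

theorem Port.mono {T T' : Set (Clause α)} {A B : Lit α}
    (hT : T ⊆ T') (h : Port T A B) : Port T' A B := by
  obtain ⟨G, hG, G', hG', hA, hB, hc⟩ := h
  refine ⟨G, hT hG, G', hT hG', hA, hB, ?_⟩
  rcases hc with rfl | ⟨x, m, p, hx, hm⟩
  · exact Or.inl rfl
  · exact Or.inr ⟨x, m, p.mono hT, hx, hm⟩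

theorem Conn.mono {T T' : Set (Clause α)} {E F : Clause α}
    (hT : T ⊆ T') (h : Conn T E F) : Conn T' E F := by
  rcases h with rfl | ⟨x, m, p⟩
  · exact Or.inl rfl
  · exact Or.inr ⟨x, m, p.mono hT⟩

theorem Conn.symm {T : Set (Clause α)} {E F : Clause α}
    (h : Conn T E F) : Conn T F E := by
  rcases h with rfl | ⟨x, m, p⟩
  · exact Or.inl rfl
  · exact Or.inr ⟨m, x, p.reverse⟩

theorem join1 {Ta Tb : Set (Clause α)} {E : Clause α} {M K : Lit α}
    (hE : E ∈ Ta) (ho : Out Ta E M) (hp : Port Tb (Lit.compl M) K)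
    (hMK : Lit.compl M ≠ K) : Out (Ta ∪ Tb) E K := by
  obtain ⟨G₂, hG₂, hMG₂, hoc⟩ := ho
  obtain ⟨G, hG, G', hG', hcMG, hKG', hpc⟩ := hp
  have hE' : E ∈ Ta ∪ Tb := Set.mem_union_left _ hE
  have hG₂' : G₂ ∈ Ta ∪ Tb := Set.mem_union_left _ hG₂
  have hGu : G ∈ Ta ∪ Tb := Set.mem_union_right _ hG
  have hG'u : G' ∈ Ta ∪ Tb := Set.mem_union_right _ hG'
  refine ⟨G', hG'u, hKG', Or.inr ?_⟩
  rcases hoc with rfl | ⟨x₀, m₀, p, hm₀⟩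
  · have hlink : APath (Ta ∪ Tb) G₂ M (Lit.compl M) G :=
      APath.base hG₂' hGu hMG₂ hcMG
    rcases hpc with rfl | ⟨x, m, q, hx, hm⟩
    · exact ⟨M, Lit.compl M, hlink, hMK⟩
    · exact ⟨M, m, hlink.trans (q.mono (Set.subset_union_right)) hx, hm⟩
  · have p' := p.mono (Set.subset_union_left (t := Tb))
    have hstep : APath (Ta ∪ Tb) E x₀ (Lit.compl M) G :=
      p'.snoc hMG₂ (fun he => hm₀ he.symm) hcMG hGu
    rcases hpc with rfl | ⟨x, m, q, hx, hm⟩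
    · exact ⟨x₀, Lit.compl M, hstep, hMK⟩
    · exact ⟨x₀, m, hstep.trans (q.mono (Set.subset_union_right)) hx, hm⟩

theorem join2 {Ta Tb : Set (Clause α)} {A M B : Lit α}
    (h₁ : Port Ta A M) (h₂ : Port Tb (Lit.compl M) B)
    (hAM : A ≠ M) (hB : B ≠ Lit.compl M) : Port (Ta ∪ Tb) A B := by
  obtain ⟨Ga, hGa, G₁, hG₁, hA, hMG₁, hc₁⟩ := h₁
  obtain ⟨G₂, hG₂, Gb, hGb, hcM, hBGb, hc₂⟩ := h₂
  have hGau : Ga ∈ Ta ∪ Tb := Set.mem_union_left _ hGa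
  have hG₁u : G₁ ∈ Ta ∪ Tb := Set.mem_union_left _ hG₁
  have hG₂u : G₂ ∈ Ta ∪ Tb := Set.mem_union_right _ hG₂
  have hGbu : Gb ∈ Ta ∪ Tb := Set.mem_union_right _ hGb
  have hlink : APath (Ta ∪ Tb) G₁ M (Lit.compl M) G₂ :=
    APath.base hG₁u hG₂u hMG₁ hcM
  -- combined path from Ga to G₂ with first exit ≠ A
  have hleft : ∃ x, APath (Ta ∪ Tb) Ga x (Lit.compl M) G₂ ∧ x ≠ A := by
    rcases hc₁ with rfl | ⟨x, m, p, hx, hm⟩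
    · exact ⟨M, hlink, fun he => hAM he.symm⟩
    · exact ⟨x, (p.mono (Set.subset_union_left)).trans hlink (fun he => hm he.symm), hx⟩
  obtain ⟨x, hxp, hxA⟩ := hleft
  refine ⟨Ga, hGau, Gb, hGbu, hA, hBGb, Or.inr ?_⟩
  rcases hc₂ with rfl | ⟨x₂, m₂, q, hx₂, hm₂⟩
  · exact ⟨x, Lit.compl M, hxp, hxA, fun he => hB he.symm⟩
  · exact ⟨x, m₂, hxp.trans (q.mono (Set.subset_union_right)) hx₂, hxA, hm₂⟩

theorem join3 {Ta Tb : Set (Clause α)} {E F : Clause α} {M : Lit α}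
    (hE : E ∈ Ta) (hF : F ∈ Tb) (h₁ : Out Ta E M) (h₂ : Out Tb F (Lit.compl M)) :
    Conn (Ta ∪ Tb) E F := by
  obtain ⟨G₁, hG₁, hMG₁, hc₁⟩ := h₁
  obtain ⟨G₂, hG₂, hcMG₂, hc₂⟩ := h₂
  have hE' : E ∈ Ta ∪ Tb := Set.mem_union_left _ hE
  have hF' : F ∈ Ta ∪ Tb := Set.mem_union_right _ hF
  have hG₁u : G₁ ∈ Ta ∪ Tb := Set.mem_union_left _ hG₁
  have hG₂u : G₂ ∈ Ta ∪ Tb := Set.mem_union_right _ hG₂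
  -- path from E to G₂ entering at compl M
  have hfirst : ∃ x, APath (Ta ∪ Tb) E x (Lit.compl M) G₂ := by
    rcases hc₁ with rfl | ⟨x, m, p, hm⟩
    · exact ⟨M, APath.base hE' hG₂u hMG₁ hcMG₂⟩
    · exact ⟨x, (p.mono (Set.subset_union_left)).snoc hMG₁
        (fun he => hm he.symm) hcMG₂ hG₂u⟩
  obtain ⟨x, hxp⟩ := hfirst
  rcases hc₂ with rfl | ⟨x₂, m₂, q, hm₂⟩
  · exact Or.inr ⟨x, Lit.compl M, hxp⟩
  · have q' := (q.mono (Set.subset_union_right (s := Ta))).reverse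
    exact Or.inr ⟨x, x₂, hxp.trans q' hm₂⟩

/-- Main structural lemma: in any derivation, the used leaves are pairwise
connected, with port control. -/
theorem der_main {T : Set (Clause α)} {R : Clause α} (h : Der T R) :
    (∀ E ∈ T, ∀ F ∈ T, Conn T E F) ∧
    (∀ K ∈ R, ∀ E ∈ T, Out T E K) ∧
    (∀ A ∈ R, ∀ B ∈ R, A ≠ B → Port T A B) := by
  induction h with
  | leaf C =>
    refine ⟨?_, ?_, ?_⟩
    · intro E hE F hF
      rw [Set.mem_singleton_iff] at hE hF
      exact Or.inl (hE.trans hF.symm)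
    · intro K hK E hE
      rw [Set.mem_singleton_iff] at hE
      exact ⟨C, rfl, hK, Or.inl hE.symm⟩
    · intro A hA B hB _
      exact ⟨C, rfl, C, rfl, hA, hB, Or.inl rfl⟩
  | @res T₁ T₂ R₁ R₂ L h₁ h₂ hL₁ hL₂ ih₁ ih₂ =>
    obtain ⟨P₁, O₁, Q₁⟩ := ih₁
    obtain ⟨P₂, O₂, Q₂⟩ := ih₂
    have hcomm : T₂ ∪ T₁ ⊆ T₁ ∪ T₂ := by rw [Set.union_comm]
    refine ⟨?_, ?_, ?_⟩
    · -- Conn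
      intro E hE F hF
      rcases hE with hE | hE <;> rcases hF with hF | hF
      · exact (P₁ E hE F hF).mono (Set.subset_union_left)
      · exact join3 hE hF (O₁ L hL₁ E hE) (O₂ (Lit.compl L) hL₂ F hF)
      · exact ((join3 hF hE (O₁ L hL₁ F hF) (O₂ (Lit.compl L) hL₂ E hE)).symm)
      · exact (P₂ E hE F hF).mono (Set.subset_union_right)
    · -- Out
      intro K hK E hE
      rcases Finset.mem_union.1 hK with hK | hK
      · obtain ⟨hKne, hKR⟩ := Finset.mem_erase.1 hK
        rcases hE with hE | hE
        · exact (O₁ K hKR E hE).mono (Set.subset_union_left)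
        · have hp : Port T₁ (Lit.compl (Lit.compl L)) K := by
            rw [compl_compl]; exact Q₁ L hL₁ K hKR (fun he => hKne he.symm)
          have hMK : Lit.compl (Lit.compl L) ≠ K := by
            rw [compl_compl]; exact fun he => hKne he.symm
          exact (join1 hE (O₂ (Lit.compl L) hL₂ E hE) hp hMK).mono hcomm
      · obtain ⟨hKne, hKR⟩ := Finset.mem_erase.1 hK
        rcases hE with hE | hE
        · exact join1 hE (O₁ L hL₁ E hE) (Q₂ (Lit.compl L) hL₂ K hKR
            (fun he => hKne he.symm)) (fun he => hKne he.symm)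
        · exact (O₂ K hKR E hE).mono (Set.subset_union_right)
    · -- Port
      intro A hA B hB hAB
      rcases Finset.mem_union.1 hA with hA | hA <;> rcases Finset.mem_union.1 hB with hB | hB
      · obtain ⟨_, hAR⟩ := Finset.mem_erase.1 hA
        obtain ⟨_, hBR⟩ := Finset.mem_erase.1 hB
        exact (Q₁ A hAR B hBR hAB).mono (Set.subset_union_left)
      · obtain ⟨hAne, hAR⟩ := Finset.mem_erase.1 hA
        obtain ⟨hBne, hBR⟩ := Finset.mem_erase.1 hB
        exact join2 (Q₁ A hAR L hL₁ hAne) (Q₂ (Lit.compl L) hL₂ B hBR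
          (fun he => hBne he.symm)) hAne hBne
      · obtain ⟨hAne, hAR⟩ := Finset.mem_erase.1 hA
        obtain ⟨hBne, hBR⟩ := Finset.mem_erase.1 hB
        have hq : Port T₁ (Lit.compl (Lit.compl L)) B := by
          rw [compl_compl]; exact Q₁ L hL₁ B hBR (fun he => hBne he.symm)
        have hB' : B ≠ Lit.compl (Lit.compl L) := by rw [compl_compl]; exact hBne
        exact (join2 (Q₂ A hAR (Lit.compl L) hL₂ hAne) hq hAne hB').mono hcomm
      · obtain ⟨hAne, hAR⟩ := Finset.mem_erase.1 hA
        obtain ⟨hBne, hBR⟩ := Finset.mem_erase.1 hB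
        exact (Q₂ A hAR B hBR hAB).mono (Set.subset_union_right)


/-- A single clause is an alternating path of length 1. -/
theorem single_path {S : Set (Clause α)} {C : Clause α} (hC : C ∈ S) :
    AltPathFromTo S C C 1 := by
  refine ⟨[C], [], ⟨by simp, rfl, ?_, ?_, ?_⟩, rfl, rfl, rfl⟩
  · intro C' hC'
    rw [List.mem_singleton] at hC'
    exact hC' ▸ hC
  · intro i h; exact absurd h (by simp)
  · intro i h; exact absurd h (by simp)

/-- Convert an `APath` into the list encoding. -/
theorem APath.encode {S : Set (Clause α)} {C D : Clause α} {x m : Lit α}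
    (hp : APath S C x m D) :
    ∃ Cs ps, IsAltPath S Cs ps ∧ Cs.head? = some C ∧ Cs.getLast? = some D ∧
      ∃ q, ps.getLast? = some q ∧ (q : Lit α × Lit α).2 = m := by
  induction hp with
  | base hC hD h₁ h₂ =>
    rename_i DD LL
    refine ⟨[C, DD], [(LL, Lit.compl LL)], ⟨by simp, rfl, ?_, ?_, ?_⟩, rfl, rfl,
      ⟨(LL, Lit.compl LL), rfl, rfl⟩⟩
    · intro C' hC'
      rcases List.mem_pair.1 hC' with rfl | rfl
      · exact hC
      · exact hD
    · intro i h
      simp only [List.length_singleton] at h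
      have hi : i = 0 := by omega
      subst hi
      exact ⟨h₁, h₂, rfl⟩
    · intro i h
      simp only [List.length_singleton] at h
      omega
  | snoc p h₁ h₂ h₃ hD' ih =>
    rename_i DD DD' xx mm LL
    obtain ⟨Cs, ps, ⟨hne, hlen, hmem, hlink, halt⟩, hhd, hlast, q, hq, hq2⟩ := ih
    have hCslen : 1 ≤ Cs.length := by
      cases Cs with
      | nil => exact absurd rfl hne
      | cons a l => simp
    have hpslen : ps.length = Cs.length - 1 := by omega
    -- the last clause of Cs is DD
    have hDlast : Cs.getD (Cs.length - 1) ∅ = DD := by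
      rw [List.getD_eq_getElem?_getD, ← List.getLast?_eq_getElem?, hlast]
      rfl
    refine ⟨Cs ++ [DD'], ps ++ [(LL, Lit.compl LL)], ⟨by simp, ?_, ?_, ?_, ?_⟩, ?_,
      List.getLast?_concat, ⟨(LL, Lit.compl LL), List.getLast?_concat, rfl⟩⟩
    · simp only [List.length_append, List.length_singleton]
      omega
    · intro C' hC'
      rcases List.mem_append.1 hC' with hC' | hC'
      · exact hmem C' hC'
      · rw [List.mem_singleton] at hC'
        exact hC' ▸ hD'
    · -- link conditions
      intro i h
      simp only [List.length_append, List.length_singleton] at h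
      simp only [List.get_eq_getElem]
      rcases Nat.lt_or_ge i ps.length with hi | hi
      · have e1 : (ps ++ [(LL, Lit.compl LL)])[i] = ps[i] := List.getElem_append_left hi
        have e2 : (Cs ++ [DD']).getD i ∅ = Cs.getD i ∅ := List.getD_append _ _ _ _ (by omega)
        have e3 : (Cs ++ [DD']).getD (i + 1) ∅ = Cs.getD (i + 1) ∅ :=
          List.getD_append _ _ _ _ (by omega)
        rw [e1, e2, e3]
        have := hlink i hi
        simpa only [List.get_eq_getElem] using this
      · have hi' : i = ps.length := by omega
        have e1 : (ps ++ [(LL, Lit.compl LL)])[i] = (LL, Lit.compl LL) :=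
          List.getElem_concat_length hi' _
        have e2 : (Cs ++ [DD']).getD i ∅ = DD := by
          rw [List.getD_append _ _ _ _ (by omega), hi', hpslen, hDlast]
        have e3 : (Cs ++ [DD']).getD (i + 1) ∅ = DD' := by
          rw [List.getD_append_right _ _ _ _ (by omega)]
          have : i + 1 - Cs.length = 0 := by omega
          rw [this]
          rfl
        rw [e1, e2, e3]
        exact ⟨h₁, h₃, rfl⟩
    · -- alternation conditions
      intro i h
      simp only [List.length_append, List.length_singleton] at h
      simp only [List.get_eq_getElem]
      rcases Nat.lt_or_ge (i + 1) ps.length with hi | hi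
      · have e1 : (ps ++ [(LL, Lit.compl LL)])[i + 1] = ps[i + 1] := List.getElem_append_left hi
        have e2 : (ps ++ [(LL, Lit.compl LL)])[i] = ps[i] :=
          List.getElem_append_left (by omega)
        rw [e1, e2]
        have := halt i hi
        simpa only [List.get_eq_getElem] using this
      · have hi' : i + 1 = ps.length := by omega
        have e1 : (ps ++ [(LL, Lit.compl LL)])[i + 1] = (LL, Lit.compl LL) :=
          List.getElem_concat_length hi' _
        have e2 : (ps ++ [(LL, Lit.compl LL)])[i] = ps[i] :=
          List.getElem_append_left (by omega)
        rw [e1, e2]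
        -- ps[i] is the last element q of ps
        have hqi : ps[i] = q := by
          have h1 : ps[i]? = some ps[i] := List.getElem?_eq_getElem (by omega)
          have h2 : ps[i]? = some q := by
            rw [← hq, List.getLast?_eq_getElem?]
            congr 1
            omega
          rw [h1] at h2
          exact Option.some.inj h2
        rw [hqi, hq2]
        exact h₂
    · -- head
      cases Cs with
      | nil => exact absurd rfl hne
      | cons a l => simpa using hhd


end Stmt2Aux

set_option maxHeartbeats 1000000 in
/-- A minimal unsatisfiable set of propositional clauses is relevance connected. -/
theorem stmt_2 {α : Type} [DecidableEq α] (S : Set (Clause α))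
    (h : MinimalUnsat S) : RelevanceConnected S := by
  intro C hC D hD
  have hfin : S.Finite := Stmt2Aux.mu_finite h
  have hSf : (↑hfin.toFinset : Set (Clause α)) = S := hfin.coe_toFinset
  have hunsat : ¬ Satisfiable (↑hfin.toFinset : Set (Clause α)) := by
    rw [hSf]; exact h.1
  obtain ⟨T, hTS, hT⟩ :=
    Stmt2Aux.complete (Stmt2Aux.atomsOf hfin.toFinset).card hfin.toFinset le_rfl hunsat
  rw [hSf] at hTS
  have hTunsat : ¬ Satisfiable T := by
    rintro ⟨v, hv⟩
    obtain ⟨K, hK, -⟩ := hT.sound v hv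
    exact absurd hK (Finset.notMem_empty _)
  have hTeq : T = S := by
    by_contra hne
    exact hTunsat (h.2 T (ssubset_of_subset_of_ne hTS hne))
  have hconn := (Stmt2Aux.der_main (hTeq ▸ hT)).1 C hC D hD
  rcases hconn with rfl | ⟨x, m, p⟩
  · exact ⟨1, Stmt2Aux.single_path hC⟩
  · obtain ⟨Cs, ps, hIs, hhd, hlast, -⟩ := p.encode
    exact ⟨Cs.length, Cs, ps, hIs, hhd, hlast, rfl⟩
end

section
/- If S is a set of propositional clauses and S' is a minimal unsatisfiable subset of S with |S'| = n, then any two distinct clauses of S' are joined by an alternating path in S' of length at most 2n − 2. -/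
set_option linter.unusedSectionVars false

namespace Stmt3Aux

variable {α : Type} [DecidableEq α]

/-- `GoodIn S C E g` : there is an alternating path in `S` starting at `C`,
ending at clause `E`, which is "exit ready" at literal `g ∈ E`. -/
inductive GoodIn (S : Set (Clause α)) (C : Clause α) : Clause α → Lit α → Prop
  | base {g : Lit α} (hC : C ∈ S) (hg : g ∈ C) : GoodIn S C C g
  | step {E F : Clause α} {g K : Lit α} (h : GoodIn S C E g) (hF : F ∈ S)
      (hcg : Lit.compl g ∈ F) (hK : K ∈ F) (hne : K ≠ Lit.compl g) : GoodIn S C F K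

def Good (S : Set (Clause α)) (C : Clause α) (g : Lit α) : Prop := ∃ E, GoodIn S C E g

lemma compl_compl (L : Lit α) : Lit.compl (Lit.compl L) = L := by
  cases L with
  | mk a b => simp [Lit.compl]

lemma sign_cases (K : Lit α) (s : Bool) : (K.1, s) = K ∨ (K.1, s) = Lit.compl K := by
  cases K with
  | mk a b => cases s <;> cases b <;> simp [Lit.compl]

lemma good_pair {S : Set (Clause α)} {C : Clause α} (K : Lit α)
    (h1 : Good S C K) (h2 : Good S C (Lit.compl K)) :
    Good S C (K.1, true) ∧ Good S C (K.1, false) := by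
  cases K with
  | mk a b => cases b <;> simp [Lit.compl] at * <;> exact ⟨‹_›, ‹_›⟩

lemma good_sign {S : Set (Clause α)} {C : Clause α} {K : Lit α} {s : Bool}
    (h : Good S C (K.1, s)) : Good S C K ∨ Good S C (Lit.compl K) := by
  rcases sign_cases K s with e | e <;> rw [e] at h
  · exact Or.inl h
  · exact Or.inr h

/-- Key semantic lemma: every clause of a minimal unsatisfiable set other than `C`
contains the complement of a good literal. -/
lemma good_complete {S : Set (Clause α)} (hmin : MinimalUnsat S) {C D : Clause α}
    (hC : C ∈ S) (hD : D ∈ S) (hne : D ≠ C) :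
    ∃ g, Good S C g ∧ Lit.compl g ∈ D := by
  classical
  by_contra hcon
  set T : Set (Clause α) := {F | F ∈ S ∧ (F = C ∨ ∃ g, Good S C g ∧ Lit.compl g ∈ F)} with hT
  have hTsub : T ⊆ S := fun F hF => hF.1
  have hCT : C ∈ T := ⟨hC, Or.inl rfl⟩
  have hDT : D ∉ T := by
    rintro ⟨-, h | ⟨g, hg, hgd⟩⟩
    · exact hne h
    · exact hcon ⟨g, hg, hgd⟩
  have hTss : T ⊂ S := ⟨hTsub, fun hST => hDT (hST hD)⟩
  obtain ⟨v', hv'⟩ := hmin.2 T hTss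
  have hscss : S \ {C} ⊂ S := ⟨Set.diff_subset, fun hs => ((hs hC).2 rfl : False)⟩
  obtain ⟨v, hv⟩ := hmin.2 _ hscss
  have hvs : ∀ F ∈ S, F ≠ C → SatClause v F := fun F hF hFC => hv F ⟨hF, hFC⟩
  have hvC : ¬ SatClause v C := by
    intro hsat
    refine hmin.1 ⟨v, fun F hF => ?_⟩
    by_cases hFC : F = C
    · exact hFC ▸ hsat
    · exact hvs F hF hFC
  have hstep : ∀ {F : Clause α} {g K : Lit α}, Good S C g → F ∈ S → Lit.compl g ∈ F →
      K ∈ F → K ≠ Lit.compl g → Good S C K := by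
    rintro F g K ⟨E, hE⟩ hF h1 h2 h3
    exact ⟨F, GoodIn.step hE hF h1 h2 h3⟩
  have hTmem : ∀ {F : Clause α} {g : Lit α}, F ∈ S → Good S C g → Lit.compl g ∈ F → F ∈ T :=
    fun hF hg hgf => ⟨hF, Or.inr ⟨_, hg, hgf⟩⟩
  -- the repaired valuation: switch to `v'` on switched atoms
  set sw : α → Prop := fun a => (Good S C (a, true) ∧ Good S C (a, false)) ∨
      ((∃ s, Good S C (a, s)) ∧ ¬ ∃ s, Good S C (a, s) ∧ v a = s) with hsw
  set u : α → Bool := fun a => if sw a then v' a else v a with hu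
  have hu_v' : ∀ a, sw a → u a = v' a := fun a h => by simp only [hu]; exact if_pos h
  have hu_v : ∀ a, ¬ sw a → u a = v a := fun a h => by simp only [hu]; exact if_neg h
  -- switched for a good literal that is false under v (and whose complement pattern checked)
  have hsw_of_good : ∀ K : Lit α, Good S C K → v K.1 ≠ K.2 → sw K.1 := by
    intro K hGK hnK
    by_cases hB : Good S C (K.1, true) ∧ Good S C (K.1, false)
    · exact Or.inl hB
    · refine Or.inr ⟨⟨K.2, by simpa using hGK⟩, ?_⟩
      rintro ⟨s, hGs, hvs⟩
      rcases sign_cases K s with e | e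
      · exact hnK (by rw [← congrArg Prod.snd e]; exact hvs)
      · rw [e] at hGs; exact hB (good_pair K hGK hGs)
  have both_good : ∀ K : Lit α, Good S C (K.1, true) → Good S C (K.1, false) →
      Good S C (Lit.compl K) := by
    intro K h1 h2
    cases K with
    | mk a b =>
      cases b
      · simpa [Lit.compl] using h1
      · simpa [Lit.compl] using h2
  -- not switched for a good literal true under v, whose complement is not good
  have hnsw_of : ∀ K : Lit α, Good S C K → v K.1 = K.2 → ¬ Good S C (Lit.compl K) → ¬ sw K.1 := by
    intro K hGK hvK hnc
    rintro (hB | ⟨-, hnGT⟩)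
    · exact hnc (both_good K hB.1 hB.2)
    · exact hnGT ⟨K.2, by simpa using hGK, hvK⟩
  have hnsw_none : ∀ K : Lit α, ¬ Good S C K → ¬ Good S C (Lit.compl K) → ¬ sw K.1 := by
    intro K h1 h2
    rintro (hB | ⟨⟨s, hGs⟩, -⟩)
    · exact h2 (both_good K hB.1 hB.2)
    · rcases good_sign hGs with h | h
      · exact h1 h
      · exact h2 h
  have main : SatSet u S := by
    intro F hF
    by_cases hFC : F = C
    · -- the start clause: all its literals are good, and all are false under v
      subst hFC
      obtain ⟨K, hKC, hK⟩ := hv' F hCT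
      have hGK : Good S F K := ⟨F, GoodIn.base hC hKC⟩
      have hnK : v K.1 ≠ K.2 := fun h => hvC ⟨K, hKC, h⟩
      exact ⟨K, hKC, by rw [SatLit, hu_v' _ (hsw_of_good K hGK hnK)]; exact hK⟩
    · by_cases hFT : F ∈ T
      · -- a clause reached by a path, with entry literal `compl g₀`
        have hM : ∃ g₀, Good S C g₀ ∧ Lit.compl g₀ ∈ F := by
          rcases hFT.2 with h | h
          · exact absurd h hFC
          · exact h
        obtain ⟨g₀, hg₀, hMF⟩ := hM
        have hexits : ∀ K ∈ F, K ≠ Lit.compl g₀ → Good S C K :=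
          fun K hK hKne => hstep hg₀ hF hMF hK hKne
        by_cases hal : ∃ b ∈ F, Good S C b ∧ Good S C (Lit.compl b)
        · -- F contains a literal good in both phases: then all literals of F are good
          obtain ⟨b, hbF, hGb, hGcb⟩ := hal
          have hallG : ∀ K ∈ F, Good S C K := by
            intro K hK
            by_cases hKb : K = b
            · exact hKb ▸ hGb
            · refine hstep hGcb hF ?_ hK ?_
              · rw [compl_compl]; exact hbF
              · rw [compl_compl]; exact hKb
          by_cases hL : ∃ L ∈ F, SatLit v L ∧ ¬(Good S C (L.1, true) ∧ Good S C (L.1, false))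
          · obtain ⟨L, hLF, hvL, hnB⟩ := hL
            have hnc : ¬ Good S C (Lit.compl L) := by
              intro hc
              exact hnB (good_pair L (hallG L hLF) hc)
            exact ⟨L, hLF, by
              rw [SatLit, hu_v _ (hnsw_of L (hallG L hLF) hvL hnc)]; exact hvL⟩
          · -- every atom of F is switched; use the v'-witness
            push_neg at hL
            obtain ⟨K, hKF, hK⟩ := hv' F hFT
            have hswK : sw K.1 := by
              by_cases hB : Good S C (K.1, true) ∧ Good S C (K.1, false)
              · exact Or.inl hB
              · have hnsat : v K.1 ≠ K.2 := by
                  intro hvv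
                  exact hB (hL K hKF hvv)
                exact hsw_of_good K (hallG K hKF) hnsat
            exact ⟨K, hKF, by rw [SatLit, hu_v' _ hswK]; exact hK⟩
        · -- no literal of F is good in both phases
          push_neg at hal
          by_cases hL : ∃ L ∈ F, L ≠ Lit.compl g₀ ∧ SatLit v L
          · obtain ⟨L, hLF, hLne, hvL⟩ := hL
            have hGL : Good S C L := hexits L hLF hLne
            exact ⟨L, hLF, by
              rw [SatLit, hu_v _ (hnsw_of L hGL hvL (hal L hLF hGL))]; exact hvL⟩
          · -- only the entry literal of F can be true under v; all atoms of F switched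
            push_neg at hL
            obtain ⟨K, hKF, hK⟩ := hv' F hFT
            have hswK : sw K.1 := by
              by_cases hKM : K = Lit.compl g₀
              · subst hKM
                refine Or.inr ⟨⟨g₀.2, by simpa [Lit.compl] using hg₀⟩, ?_⟩
                rintro ⟨s, hGs, hvss⟩
                have hKgood : ¬ Good S C (Lit.compl g₀) := by
                  intro hgg
                  exact hal (Lit.compl g₀) hKF hgg (by rw [compl_compl]; exact hg₀)
                rcases good_sign (K := Lit.compl g₀) (by simpa [compl_compl] using hGs) with h | h
                · exact hKgood h
                · -- h : Good (compl (compl g₀)) = Good g₀; fine, but then v must satisfy compl g₀?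
                  -- we need contradiction from hvss : v (compl g₀).1 = s
                  -- goods on this atom: only g₀ (since compl g₀ not good);
                  -- so (a, s) = g₀-pattern: s = g₀.2 → v a = g₀.2 contradicts v-witness?
                  rcases sign_cases (Lit.compl g₀) s with e | e
                  · -- (a, s) = compl g₀ : but compl g₀ is not good, while hGs says it is
                    exact hKgood (e ▸ hGs)
                  · -- (a, s) = compl (compl g₀) = g₀ : then v a = g₀.2; but v
                    -- satisfies compl g₀ (the only possibly-true literal of F), contradiction
                    have hvM : SatLit v (Lit.compl g₀) := by
                      obtain ⟨K', hK'F, hvK'⟩ := hvs F hF hFC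
                      by_cases hKM' : K' = Lit.compl g₀
                      · exact hKM' ▸ hvK'
                      · exact absurd hvK' (hL K' hK'F hKM')
                    have e' : ((Lit.compl g₀).1, s) = g₀ := by rw [e, compl_compl]
                    have hs : s = g₀.2 := congrArg Prod.snd e'
                    have h1 : v g₀.1 = g₀.2 := by
                      have ha : (Lit.compl g₀).1 = g₀.1 := rfl
                      rw [← ha, hvss, hs]
                    have h2 : v g₀.1 = !g₀.2 := hvM
                    rw [h1] at h2
                    simp at h2
              · have hGK : Good S C K := hexits K hKF hKM
                exact hsw_of_good K hGK (hL K hKF hKM)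
            exact ⟨K, hKF, by rw [SatLit, hu_v' _ hswK]; exact hK⟩
      · -- a clause not in T : its v-witness atom is untouched
        obtain ⟨K, hKF, hvK⟩ := hvs F hF hFC
        have hnGc : ¬ Good S C (Lit.compl K) := by
          intro hg
          exact hFT (hTmem hF hg (by rw [compl_compl]; exact hKF))
        have hnsw : ¬ sw K.1 := by
          by_cases hGK : Good S C K
          · exact hnsw_of K hGK hvK hnGc
          · exact hnsw_none K hGK hnGc
        exact ⟨K, hKF, by rw [SatLit, hu_v _ hnsw]; exact hvK⟩
  exact hmin.1 ⟨u, main⟩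


lemma getD_eq {β : Type} (l : List β) (i : ℕ) (h : i < l.length) (d : β) :
    l.getD i d = l[i] := by
  simp [List.getD_eq_getElem?_getD, List.getElem?_eq_getElem h]

lemma get_eq {β : Type} (l : List β) (i : ℕ) (h : i < l.length) :
    l.get ⟨i, h⟩ = l[i] := rfl

lemma getElem_idx_congr {β : Type} (l : List β) {i j : ℕ} (h : i = j) (hi : i < l.length) :
    l[i] = l[j]'(h ▸ hi) := by subst h; rfl

lemma isAltPath_take {S : Set (Clause α)} {Cs : List (Clause α)} {ps : List (Lit α × Lit α)}
    (h : IsAltPath S Cs ps) (k : ℕ) (hk : k ≤ ps.length) :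
    IsAltPath S (Cs.take (k + 1)) (ps.take k) := by
  obtain ⟨hne, hlen, hmem, hpair, hneq⟩ := h
  have hCl : Cs.length = ps.length + 1 := hlen.symm
  have hlt : (ps.take k).length = k := by simp; omega
  have hct : (Cs.take (k + 1)).length = k + 1 := by simp; omega
  refine ⟨by intro hh; rw [hh] at hct; simp at hct, by omega, ?_, ?_, ?_⟩
  · exact fun X hX => hmem X (List.take_subset _ _ hX)
  · intro i hi
    have hik : i < k := by omega
    have e1 : (ps.take k).get ⟨i, hi⟩ = ps.get ⟨i, by omega⟩ := by
      rw [get_eq, get_eq, List.getElem_take]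
    have e2 : (Cs.take (k + 1)).getD i ∅ = Cs.getD i ∅ := by
      rw [getD_eq _ _ (by omega), getD_eq _ _ (by omega), List.getElem_take]
    have e3 : (Cs.take (k + 1)).getD (i + 1) ∅ = Cs.getD (i + 1) ∅ := by
      rw [getD_eq _ _ (by omega), getD_eq _ _ (by omega), List.getElem_take]
    rw [e1, e2, e3]
    exact hpair i (by omega)
  · intro i hi
    have e1 : (ps.take k).get ⟨i + 1, hi⟩ = ps.get ⟨i + 1, by omega⟩ := by
      rw [get_eq, get_eq, List.getElem_take]
    have e2 : (ps.take k).get ⟨i, Nat.lt_of_succ_lt hi⟩ = ps.get ⟨i, by omega⟩ := by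
      rw [get_eq, get_eq, List.getElem_take]
    rw [e1, e2]
    exact hneq i (by omega)

lemma isAltPath_drop {S : Set (Clause α)} {Cs : List (Clause α)} {ps : List (Lit α × Lit α)}
    (h : IsAltPath S Cs ps) (k : ℕ) (hk : k ≤ ps.length) :
    IsAltPath S (Cs.drop k) (ps.drop k) := by
  obtain ⟨hne, hlen, hmem, hpair, hneq⟩ := h
  have hCl : Cs.length = ps.length + 1 := hlen.symm
  have hld : (ps.drop k).length = ps.length - k := by simp
  have hcd : (Cs.drop k).length = ps.length + 1 - k := by simp; omega
  refine ⟨by intro hh; rw [hh] at hcd; simp at hcd; omega, by omega, ?_, ?_, ?_⟩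
  · exact fun X hX => hmem X (List.drop_subset _ _ hX)
  · intro i hi
    have hik : i < ps.length - k := by omega
    have e1 : (ps.drop k).get ⟨i, hi⟩ = ps.get ⟨k + i, by omega⟩ := by
      rw [get_eq, get_eq, List.getElem_drop]
    have e2 : (Cs.drop k).getD i ∅ = Cs.getD (k + i) ∅ := by
      rw [getD_eq _ _ (by omega), getD_eq _ _ (by omega), List.getElem_drop]
    have e3 : (Cs.drop k).getD (i + 1) ∅ = Cs.getD (k + i + 1) ∅ := by
      rw [getD_eq _ _ (by omega), getD_eq _ _ (by omega), List.getElem_drop]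
      exact getElem_idx_congr Cs (by omega) _
    rw [e1, e2, e3]
    exact hpair (k + i) (by omega)
  · intro i hi
    have e1 : (ps.drop k).get ⟨i + 1, hi⟩ = ps.get ⟨k + i + 1, by omega⟩ := by
      rw [get_eq, get_eq, List.getElem_drop]
      exact getElem_idx_congr ps (by omega) _
    have e2 : (ps.drop k).get ⟨i, Nat.lt_of_succ_lt hi⟩ = ps.get ⟨k + i, by omega⟩ := by
      rw [get_eq, get_eq, List.getElem_drop]
    rw [e1, e2]
    exact hneq (k + i) (by omega)


lemma isAltPath_singleton {S : Set (Clause α)} {C : Clause α} (hC : C ∈ S) :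
    IsAltPath S [C] [] := by
  refine ⟨by simp, by simp, by simp [hC], ?_, ?_⟩
  · intro i h; simp at h
  · intro i h; simp at h

lemma isAltPath_snoc {S : Set (Clause α)} {Cs : List (Clause α)} {ps : List (Lit α × Lit α)}
    {E F : Clause α} {g : Lit α}
    (h : IsAltPath S Cs ps) (hlast : Cs.getLast? = some E) (hgE : g ∈ E)
    (hexit : ∀ p ∈ ps.getLast?, (p : Lit α × Lit α).2 ≠ g) (hF : F ∈ S) (hc : Lit.compl g ∈ F) :
    IsAltPath S (Cs ++ [F]) (ps ++ [(g, Lit.compl g)]) := by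
  obtain ⟨hne, hlen, hmem, hpair, hneq⟩ := h
  have hCl : Cs.length = ps.length + 1 := hlen.symm
  have hE : Cs[ps.length]'(by omega) = E := by
    rw [List.getLast?_eq_getElem?] at hlast
    have h1 : Cs.length - 1 = ps.length := by omega
    rw [h1, List.getElem?_eq_getElem (by omega)] at hlast
    exact (Option.some_injective _ hlast)
  refine ⟨by simp, by simp [hCl], ?_, ?_, ?_⟩
  · intro X hX
    rcases List.mem_append.1 hX with h | h
    · exact hmem X h
    · simp at h; exact h ▸ hF
  · intro i hi
    have hi' : i < ps.length + 1 := by simpa using hi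
    rcases Nat.lt_or_ge i ps.length with hlt | hge
    · have e1 : (ps ++ [(g, Lit.compl g)]).get ⟨i, hi⟩ = ps.get ⟨i, hlt⟩ := by
        rw [get_eq, get_eq, List.getElem_append_left hlt]
      have e2 : (Cs ++ [F]).getD i ∅ = Cs.getD i ∅ := by
        rw [getD_eq _ _ (by simp; omega), getD_eq _ _ (by omega),
          List.getElem_append_left (by omega)]
      have e3 : (Cs ++ [F]).getD (i + 1) ∅ = Cs.getD (i + 1) ∅ := by
        rw [getD_eq _ _ (by simp; omega), getD_eq _ _ (by omega),
          List.getElem_append_left (by omega)]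
      rw [e1, e2, e3]
      exact hpair i hlt
    · have hieq : i = ps.length := by omega
      subst hieq
      have e1 : (ps ++ [(g, Lit.compl g)]).get ⟨ps.length, hi⟩ = (g, Lit.compl g) := by
        rw [get_eq, List.getElem_append_right (le_refl _)]
        simp
      have e2 : (Cs ++ [F]).getD ps.length ∅ = E := by
        rw [getD_eq _ _ (by simp; omega), List.getElem_append_left (by omega), hE]
      have e3 : (Cs ++ [F]).getD (ps.length + 1) ∅ = F := by
        rw [getD_eq _ _ (by simp; omega), List.getElem_append_right (by omega)]
        simp [hCl]
      rw [e1, e2, e3]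
      exact ⟨hgE, hc, rfl⟩
  · intro i hi
    have hi' : i + 1 < ps.length + 1 := by simpa using hi
    rcases Nat.lt_or_ge (i + 1) ps.length with hlt | hge
    · have e1 : (ps ++ [(g, Lit.compl g)]).get ⟨i + 1, hi⟩ = ps.get ⟨i + 1, hlt⟩ := by
        rw [get_eq, get_eq, List.getElem_append_left hlt]
      have e2 : (ps ++ [(g, Lit.compl g)]).get ⟨i, Nat.lt_of_succ_lt hi⟩
          = ps.get ⟨i, by omega⟩ := by
        rw [get_eq, get_eq, List.getElem_append_left (by omega)]
      rw [e1, e2]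
      exact hneq i hlt
    · have hieq : i + 1 = ps.length := by omega
      have e1 : (ps ++ [(g, Lit.compl g)]).get ⟨i + 1, hi⟩ = (g, Lit.compl g) := by
        rw [get_eq, List.getElem_append_right (by omega)]
        have h0 : i + 1 - ps.length = 0 := by omega
        simp [h0]
      have e2 : (ps ++ [(g, Lit.compl g)]).get ⟨i, Nat.lt_of_succ_lt hi⟩
          = ps.get ⟨i, by omega⟩ := by
        rw [get_eq, get_eq, List.getElem_append_left (by omega)]
      rw [e1, e2]
      have hplast : ps.getLast? = some (ps.get ⟨i, by omega⟩) := by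
        rw [List.getLast?_eq_getElem?, get_eq]
        have : ps.length - 1 = i := by omega
        rw [this]
        simp
      exact fun hcontra => (hexit _ hplast) (by rw [← hcontra])

lemma goodIn_mem {S : Set (Clause α)} {C E : Clause α} {g : Lit α} (h : GoodIn S C E g) :
    g ∈ E ∧ E ∈ S := by
  induction h with
  | base hC hg => exact ⟨hg, hC⟩
  | step h hF hcg hK hne ih => exact ⟨hK, hF⟩

lemma goodIn_path {S : Set (Clause α)} {C E : Clause α} {g : Lit α}
    (h : GoodIn S C E g) :
    ∃ Cs ps, IsAltPath S Cs ps ∧ Cs.head? = some C ∧ Cs.getLast? = some E ∧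
      ∀ p ∈ ps.getLast?, (p : Lit α × Lit α).2 ≠ g := by
  induction h with
  | base hC hg =>
    exact ⟨[C], [], isAltPath_singleton hC, rfl, rfl, by simp⟩
  | @step E F g K h hF hcg hK hne ih =>
    obtain ⟨Cs, ps, hp, hh, hl, hex⟩ := ih
    refine ⟨Cs ++ [F], ps ++ [(g, Lit.compl g)],
      isAltPath_snoc hp hl (goodIn_mem h).1 hex hF hcg, ?_, List.getLast?_concat, ?_⟩
    · rcases Cs with _ | ⟨X, Xs⟩
      · exact absurd rfl hp.1
      · simpa using hh
    · intro p hp'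
      rw [List.getLast?_concat] at hp'
      have : p = (g, Lit.compl g) := by simpa using hp'.symm
      rw [this]
      exact fun hc => hne hc.symm



lemma getLast?_drop {β : Type} (l : List β) (k : ℕ) (hk : k < l.length) :
    (l.drop k).getLast? = l.getLast? := by
  rw [List.getLast?_eq_getElem?, List.getLast?_eq_getElem?, List.getElem?_drop]
  congr 1
  simp
  omega

lemma isAltPath_splice {S : Set (Clause α)} {Cs : List (Clause α)} {ps : List (Lit α × Lit α)}
    (h : IsAltPath S Cs ps) {i j : ℕ} (hi0 : 0 < i) (hij : i < j)
    (hj : j < ps.length) (hcl : Cs.getD i ∅ = Cs.getD j ∅)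
    (hjun : (ps.get ⟨j, hj⟩).1 ≠ (ps.get ⟨i - 1, by omega⟩).2) :
    IsAltPath S (Cs.take (i + 1) ++ Cs.drop (j + 1)) (ps.take i ++ ps.drop j) ∧
    (Cs.take (i + 1) ++ Cs.drop (j + 1)).head? = Cs.head? ∧
    (Cs.take (i + 1) ++ Cs.drop (j + 1)).getLast? = Cs.getLast? ∧
    (Cs.take (i + 1) ++ Cs.drop (j + 1)).length = Cs.length - (j - i) := by
  obtain ⟨hne, hlen, hmem, hpair, hneq⟩ := h
  have hCl : Cs.length = ps.length + 1 := hlen.symm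
  have lps : (ps.take i ++ ps.drop j).length = i + (ps.length - j) := by simp; omega
  have lcs : (Cs.take (i + 1) ++ Cs.drop (j + 1)).length = (i + 1) + (ps.length - j) := by
    simp; omega
  have eP1 : ∀ t (ht : t < i) (h2 : t < (ps.take i ++ ps.drop j).length),
      (ps.take i ++ ps.drop j).get ⟨t, h2⟩ = ps.get ⟨t, by omega⟩ := by
    intro t ht h2
    rw [get_eq, get_eq, List.getElem_append_left (by simp; omega), List.getElem_take]
  have eP2 : ∀ t (ht : i ≤ t) (h2 : t < (ps.take i ++ ps.drop j).length),
      (ps.take i ++ ps.drop j).get ⟨t, h2⟩ = ps.get ⟨j + (t - i), by rw [lps] at h2; omega⟩ := by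
    intro t ht h2
    rw [get_eq, get_eq, List.getElem_append_right (by simp; omega), List.getElem_drop]
    exact getElem_idx_congr ps (by simp; omega) _
  have eC1 : ∀ t (ht : t ≤ i), (Cs.take (i + 1) ++ Cs.drop (j + 1)).getD t ∅ = Cs.getD t ∅ := by
    intro t ht
    rw [getD_eq _ _ (by rw [lcs]; omega), getD_eq _ _ (by omega),
      List.getElem_append_left (by simp; omega), List.getElem_take]
  have eC2 : ∀ t (ht : i ≤ t) (h2 : t < (i + 1) + (ps.length - j)),
      (Cs.take (i + 1) ++ Cs.drop (j + 1)).getD t ∅ = Cs.getD (j + (t - i)) ∅ := by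
    intro t ht h2
    rcases Nat.eq_or_lt_of_le ht with rfl | hti
    · have h0 : j + (i - i) = j := by omega
      rw [h0, ← hcl]
      exact eC1 i (le_refl i)
    · rw [getD_eq _ _ (by rw [lcs]; omega), getD_eq _ _ (by omega),
        List.getElem_append_right (by simp; omega), List.getElem_drop]
      exact getElem_idx_congr Cs (by simp; omega) _
  refine ⟨⟨?_, ?_, ?_, ?_, ?_⟩, ?_, ?_, ?_⟩
  · intro hh
    rw [hh] at lcs
    simp at lcs
    omega
  · omega
  · intro X hX
    rcases List.mem_append.1 hX with h | h
    · exact hmem X (List.take_subset _ _ h)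
    · exact hmem X (List.drop_subset _ _ h)
  · intro t ht
    have ht' : t < i + (ps.length - j) := by rw [lps] at ht; omega
    rcases Nat.lt_or_ge t i with hti | hti
    · rw [eP1 t hti ht, eC1 t (by omega), eC1 (t + 1) (by omega)]
      exact hpair t (by omega)
    · have e4 : j + (t + 1 - i) = j + (t - i) + 1 := by omega
      rw [eP2 t hti ht, eC2 t hti (by omega), eC2 (t + 1) (by omega) (by omega), e4]
      exact hpair (j + (t - i)) (by omega)
  · intro t ht
    have ht' : t + 1 < i + (ps.length - j) := by rw [lps] at ht; omega
    rcases Nat.lt_or_ge (t + 1) i with hti | hti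
    · rw [eP1 (t + 1) hti ht, eP1 t (by omega) (Nat.lt_of_succ_lt ht)]
      exact hneq t (by omega)
    · rcases Nat.eq_or_lt_of_le hti with hti2 | hti2
      · -- t + 1 = i : junction
        have e4 : j + (t + 1 - i) = j := by omega
        rw [eP2 (t + 1) hti ht, eP1 t (by omega) (Nat.lt_of_succ_lt ht)]
        simp only [e4]
        have e5 : t = i - 1 := by omega
        subst e5
        exact hjun
      · have e4 : j + (t + 1 - i) = j + (t - i) + 1 := by omega
        rw [eP2 (t + 1) hti ht, eP2 t (by omega) (Nat.lt_of_succ_lt ht)]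
        simp only [e4]
        exact hneq (j + (t - i)) (by omega)
  · rcases Cs with _ | ⟨X, Xs⟩
    · exact absurd rfl hne
    · simp [List.take_succ_cons]
  · have hdr : Cs.drop (j + 1) ≠ [] := by
      intro hh
      have := congrArg List.length hh
      simp at this
      omega
    rw [List.getLast?_append]
    rw [getLast?_drop _ _ (by omega)]
    rcases hl : Cs.getLast? with _ | X
    · rw [List.getLast?_eq_none_iff] at hl
      exact absurd hl hne
    · simp
  · omega


end Stmt3Aux

set_option maxHeartbeats 1000000 in
/-- If `S'` is a minimal unsatisfiable subset of `S` with `|S'` = n`, then any two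
distinct clauses of `S'` are joined by an alternating path in `S'` of length at
most `2n − 2`. -/
theorem stmt_3 {α : Type} [DecidableEq α] (S : Set (Clause α))
    (S' : Finset (Clause α)) (hsub : ↑S' ⊆ S)
    (hmin : MinimalUnsat (↑S' : Set (Clause α))) (n : ℕ) (hn : S'.card = n)
    (C D : Clause α) (hC : C ∈ S') (hD : D ∈ S') (hne : C ≠ D) :
    ∃ m ≤ 2 * n - 2, AltPathFromTo (↑S' : Set (Clause α)) C D m := by
  classical
  subst hn
  have hCS : C ∈ (↑S' : Set (Clause α)) := by exact_mod_cast hC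
  have hDS : D ∈ (↑S' : Set (Clause α)) := by exact_mod_cast hD
  have hcard2 : 2 ≤ S'.card := Finset.one_lt_card.2 ⟨C, hC, D, hD, hne⟩
  -- existence of some alternating path from C to D
  obtain ⟨g, ⟨E, hE⟩, hgD⟩ := Stmt3Aux.good_complete hmin hCS hDS (Ne.symm hne)
  obtain ⟨Cs₀, ps₀, hp₀, hh₀, hl₀, hex₀⟩ := Stmt3Aux.goodIn_path hE
  have hpath1 : AltPathFromTo (↑S' : Set (Clause α)) C D (Cs₀.length + 1) := by
    refine ⟨Cs₀ ++ [D], ps₀ ++ [(g, Lit.compl g)],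
      Stmt3Aux.isAltPath_snoc hp₀ hl₀ (Stmt3Aux.goodIn_mem hE).1 hex₀ hDS hgD, ?_,
      List.getLast?_concat, by simp⟩
    rcases Cs₀ with _ | ⟨X, Xs⟩
    · exact absurd rfl hp₀.1
    · simpa using hh₀
  have hexists : ∃ m, AltPathFromTo (↑S' : Set (Clause α)) C D m := ⟨_, hpath1⟩
  have hspec := Nat.find_spec hexists
  have hminfind : ∀ m < Nat.find hexists, ¬ AltPathFromTo (↑S' : Set (Clause α)) C D m :=
    fun m hm => Nat.find_min hexists hm
  refine ⟨Nat.find hexists, ?_, hspec⟩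
  by_contra hbig
  push_neg at hbig
  obtain ⟨Cs, ps, hp, hh, hl, hlen⟩ := hspec
  have hnps : ps.length + 1 = Cs.length := hp.2.1
  have hne0 : Cs ≠ [] := hp.1
  have hlpos : 0 < Cs.length := List.length_pos_iff.2 hne0
  -- C occurs only at position 0
  have step1 : ∀ i, 0 < i → i < Cs.length → Cs.getD i ∅ ≠ C := by
    intro i hi0 hiL hEq
    have hk : i ≤ ps.length := by omega
    have hdropped := Stmt3Aux.isAltPath_drop hp i hk
    have hhd : (Cs.drop i).head? = some C := by
      rw [List.head?_drop, List.getElem?_eq_getElem hiL, ← Stmt3Aux.getD_eq Cs i hiL ∅, hEq]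
    have hld : (Cs.drop i).getLast? = some D := by
      rw [Stmt3Aux.getLast?_drop Cs i hiL]; exact hl
    exact hminfind (Cs.length - i) (by omega)
      ⟨Cs.drop i, ps.drop i, hdropped, hhd, hld, by simp⟩
  -- D occurs only at the last position
  have step2 : ∀ i, i < Cs.length - 1 → Cs.getD i ∅ ≠ D := by
    intro i hi hEq
    have hk : i ≤ ps.length := by omega
    have hiL : i < Cs.length := by omega
    have htaken := Stmt3Aux.isAltPath_take hp i hk
    have hhd : (Cs.take (i + 1)).head? = some C := by
      rcases Cs with _ | ⟨X, Xs⟩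
      · exact absurd rfl hne0
      · simpa using hh
    have hld : (Cs.take (i + 1)).getLast? = some D := by
      rw [List.getLast?_eq_getElem?]
      have hlt : (Cs.take (i + 1)).length = i + 1 := by simp; omega
      rw [hlt]
      simp only [Nat.add_sub_cancel]
      rw [List.getElem?_take_of_lt (Nat.lt_succ_self i), List.getElem?_eq_getElem hiL,
        ← Stmt3Aux.getD_eq Cs i hiL ∅, hEq]
    exact hminfind (i + 1) (by omega)
      ⟨Cs.take (i + 1), ps.take i, htaken, hhd, hld, by simp; omega⟩
  -- pigeonhole: some interior clause occurs three times
  have hmaps : ∀ i ∈ Finset.Ico 1 (Cs.length - 1),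
      Cs.getD i ∅ ∈ (S'.erase C).erase D := by
    intro i hi
    rw [Finset.mem_Ico] at hi
    have hiL : i < Cs.length := by omega
    have hmemS : Cs.getD i ∅ ∈ S' := by
      have h1 : Cs.getD i ∅ ∈ Cs := by
        rw [Stmt3Aux.getD_eq Cs i hiL ∅]
        exact List.getElem_mem _
      exact_mod_cast hp.2.2.1 _ h1
    exact Finset.mem_erase.2 ⟨step2 i (by omega),
      Finset.mem_erase.2 ⟨step1 i (by omega) hiL, hmemS⟩⟩
  have hcard_lt : ((S'.erase C).erase D).card * 2 < (Finset.Ico 1 (Cs.length - 1)).card := by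
    rw [Nat.card_Ico]
    have e1 : ((S'.erase C).erase D).card = S'.card - 2 := by
      rw [Finset.card_erase_of_mem (Finset.mem_erase.2 ⟨Ne.symm hne, hD⟩),
        Finset.card_erase_of_mem hC]
      omega
    rw [e1]
    omega
  obtain ⟨E', hE't, hfib⟩ :=
    Finset.exists_lt_card_fiber_of_mul_lt_card_of_maps_to hmaps hcard_lt
  set fib := (Finset.Ico 1 (Cs.length - 1)).filter (fun x => Cs.getD x ∅ = E') with hfibdef
  have hsorted : (fib.sort (· ≤ ·)).Pairwise (· < ·) := (Finset.sortedLT_sort _).pairwise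
  have hlen3 : 2 < (fib.sort (· ≤ ·)).length := by
    rw [Finset.length_sort]
    exact hfib
  set l := fib.sort (· ≤ ·) with hldef
  have hmono := List.pairwise_iff_getElem.1 hsorted
  have hmem3 : ∀ t, t < l.length → 1 ≤ l.getD t 0 ∧ l.getD t 0 < Cs.length - 1 ∧
      Cs.getD (l.getD t 0) ∅ = E' := by
    intro t ht
    rw [Stmt3Aux.getD_eq l t ht 0]
    have hmm : l[t] ∈ fib := by
      rw [← Finset.mem_sort (α := ℕ) (· ≤ ·)]
      exact List.getElem_mem _
    rw [hfibdef, Finset.mem_filter, Finset.mem_Ico] at hmm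
    exact ⟨hmm.1.1, hmm.1.2, hmm.2⟩
  have hmono' : ∀ a b, a < b → b < l.length → l.getD a 0 < l.getD b 0 := by
    intro a b hab hb
    rw [Stmt3Aux.getD_eq l a (by omega) 0, Stmt3Aux.getD_eq l b hb 0]
    exact hmono a b (by omega) hb hab
  obtain ⟨i, hieq⟩ : ∃ x, l.getD 0 0 = x := ⟨_, rfl⟩
  obtain ⟨j, hjeq⟩ : ∃ x, l.getD 1 0 = x := ⟨_, rfl⟩
  obtain ⟨k, hkeq⟩ : ∃ x, l.getD 2 0 = x := ⟨_, rfl⟩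
  obtain ⟨hi1, hiU, hiE⟩ := hmem3 0 (by omega)
  obtain ⟨hj1, hjU, hjE⟩ := hmem3 1 (by omega)
  obtain ⟨hk1, hkU, hkE⟩ := hmem3 2 (by omega)
  rw [hieq] at hi1 hiU hiE
  rw [hjeq] at hj1 hjU hjE
  rw [hkeq] at hk1 hkU hkE
  have hij : i < j := by
    have := hmono' 0 1 (by omega) (by omega)
    rw [hieq, hjeq] at this
    exact this
  have hjk : j < k := by
    have := hmono' 1 2 (by omega) (by omega)
    rw [hjeq, hkeq] at this
    exact this
  have hpsl : Cs.length - 1 = ps.length := by omega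
  have hjps : j < ps.length := by omega
  have hkps : k < ps.length := by omega
  have hi1ps : i - 1 < ps.length := by omega
  have hj1ps : j - 1 < ps.length := by omega
  -- splicing a shorter path, in each of the three cases
  have splice_contra : ∀ a b : ℕ, 0 < a → a < b → ∀ hb : b < ps.length,
      Cs.getD a ∅ = Cs.getD b ∅ →
      (∀ ha : a - 1 < ps.length, (ps.get ⟨b, hb⟩).1 ≠ (ps.get ⟨a - 1, ha⟩).2) → False := by
    intro a b ha0 hab hb hcl hjun
    obtain ⟨hsp, hhd, hld, hln⟩ := Stmt3Aux.isAltPath_splice hp ha0 hab hb hcl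
      (hjun (by omega))
    refine hminfind (Cs.length - (b - a)) (by omega)
      ⟨_, _, hsp, ?_, ?_, ?_⟩
    · rw [hhd]; exact hh
    · rw [hld]; exact hl
    · rw [hln]
  have hclij : Cs.getD i ∅ = Cs.getD j ∅ := by rw [hiE, hjE]
  have hclik : Cs.getD i ∅ = Cs.getD k ∅ := by rw [hiE, hkE]
  have hcljk : Cs.getD j ∅ = Cs.getD k ∅ := by rw [hjE, hkE]
  by_cases hc1 : (ps.get ⟨j, hjps⟩).1 = (ps.get ⟨i - 1, hi1ps⟩).2
  · by_cases hc2 : (ps.get ⟨k, hkps⟩).1 = (ps.get ⟨i - 1, hi1ps⟩).2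
    · -- both exits equal the entry at i; use the alternation condition at j
      have hjj : j - 1 + 1 = j := by omega
      have halt := hp.2.2.2.2 (j - 1) (by omega)
      have hfin : (⟨j - 1 + 1, by omega⟩ : Fin ps.length) = ⟨j, hjps⟩ := by
        simp [Fin.mk.injEq]
        omega
      rw [hfin] at halt
      -- halt : ps[j].1 ≠ ps[j-1].2
      refine splice_contra j k (by omega) hjk hkps hcljk ?_
      intro ha
      rw [hc2, ← hc1]
      exact halt
    · exact splice_contra i k (by omega) (by omega) hkps hclik (fun ha => hc2)
  · exact splice_contra i j (by omega) hij hjps hclij (fun ha => hc1)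
end

section
/- If there is a resolution refutation of length n from a set S of propositional clauses, then there is a minimal unsatisfiable subset T' of S such that any two distinct clauses of T' are joined by an alternating path in T' of length at most 2n − 2. -/
set_option linter.unusedSectionVars false


namespace Stmt4

variable {α : Type} [DecidableEq α]

@[simp] lemma compl_compl (L : Lit α) : L.compl.compl = L := by
  cases L with | mk a b => simp [Lit.compl]

lemma compl_ne (L : Lit α) : Lit.compl L ≠ L := by
  cases L with | mk a b => simp [Lit.compl]

lemma not_satLit_both {v : α → Bool} {L : Lit α} (h1 : SatLit v L) (h2 : SatLit v L.compl) : False := by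
  cases L with | mk a b =>
  simp [SatLit, Lit.compl] at h1 h2
  rw [h1] at h2; simp at h2

/-- Resolution derivations from a set of clauses. -/
inductive Deriv (T : Set (Clause α)) : Clause α → Prop
  | ax {C : Clause α} : C ∈ T → Deriv T C
  | res {C₁ C₂ : Clause α} {L : Lit α} : Deriv T C₁ → Deriv T C₂ →
      L ∈ C₁ → Lit.compl L ∈ C₂ → Deriv T ((C₁.erase L) ∪ (C₂.erase (Lit.compl L)))

lemma Deriv.lit_origin {T : Set (Clause α)} {C : Clause α} (h : Deriv T C) :
    ∀ L ∈ C, ∃ C₀ ∈ T, L ∈ C₀ := by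
  induction h with
  | ax hC => exact fun L hL => ⟨_, hC, hL⟩
  | res h1 h2 hL hcL ih1 ih2 =>
    intro M hM
    rcases Finset.mem_union.1 hM with hM | hM
    · exact ih1 M (Finset.mem_of_mem_erase hM)
    · exact ih2 M (Finset.mem_of_mem_erase hM)

lemma satClause_resolvent {v : α → Bool} {C₁ C₂ : Clause α} {L : Lit α}
    (h1 : SatClause v C₁) (h2 : SatClause v C₂) :
    SatClause v ((C₁.erase L) ∪ (C₂.erase (Lit.compl L))) := by
  obtain ⟨M1, hM1, hs1⟩ := h1
  obtain ⟨M2, hM2, hs2⟩ := h2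
  by_cases e1 : M1 = L
  · by_cases e2 : M2 = Lit.compl L
    · exfalso; subst e1; subst e2; exact not_satLit_both hs1 hs2
    · exact ⟨M2, Finset.mem_union_right _ (Finset.mem_erase.2 ⟨e2, hM2⟩), hs2⟩
  · exact ⟨M1, Finset.mem_union_left _ (Finset.mem_erase.2 ⟨e1, hM1⟩), hs1⟩

lemma Deriv.sound {T : Set (Clause α)} {C : Clause α} (h : Deriv T C)
    {v : α → Bool} (hv : SatSet v T) : SatClause v C := by
  induction h with
  | ax hC => exact hv _ hC
  | res h1 h2 hL hcL ih1 ih2 => exact satClause_resolvent ih1 ih2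

lemma not_satClause_empty (v : α → Bool) : ¬ SatClause v (∅ : Clause α) := by
  rintro ⟨L, hL, -⟩; simp at hL

/-- The atoms occurring in a finite clause set. -/
def atomsOf (T : Finset (Clause α)) : Finset α := T.sup (fun C => C.image Prod.fst)

lemma mem_atomsOf {T : Finset (Clause α)} {a : α} :
    a ∈ atomsOf T ↔ ∃ C ∈ T, ∃ b, (a, b) ∈ C := by
  simp only [atomsOf, Finset.mem_sup, Finset.mem_image]
  constructor
  · rintro ⟨C, hC, ⟨⟨x, b⟩, hx, rfl⟩⟩; exact ⟨C, hC, b, hx⟩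
  · rintro ⟨C, hC, b, hb⟩; exact ⟨C, hC, ⟨(a, b), hb, rfl⟩⟩

/-- Assigning atom `a := b` in the clause set. -/
def assign (T : Finset (Clause α)) (a : α) (b : Bool) : Finset (Clause α) :=
  (T.filter (fun C => (a, b) ∉ C)).image (fun C => C.erase (a, !b))

lemma assign_unsat {T : Finset (Clause α)} {a : α} (b : Bool)
    (hT : ¬ Satisfiable (↑T : Set (Clause α))) :
    ¬ Satisfiable (↑(assign T a b) : Set (Clause α)) := by
  rintro ⟨v, hv⟩
  apply hT
  refine ⟨Function.update v a b, ?_⟩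
  intro C hC
  simp only [Finset.coe_mem, Finset.mem_coe] at hC
  by_cases hab : (a, b) ∈ C
  · exact ⟨(a, b), hab, by simp [SatLit]⟩
  · have hC' : C.erase (a, !b) ∈ assign T a b := by
      apply Finset.mem_image_of_mem
      exact Finset.mem_filter.2 ⟨hC, hab⟩
    obtain ⟨L, hL, hsL⟩ := hv _ (Finset.mem_coe.2 hC')
    have hLC : L ∈ C := Finset.mem_of_mem_erase hL
    have hne : L.1 ≠ a := by
      rintro rfl
      rcases Bool.eq_or_eq_not L.2 b with hb | hb
      · exact hab (by rw [← hb]; exact hLC)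
      · exact (Finset.mem_erase.1 hL).1 (Prod.ext rfl hb)
    exact ⟨L, hLC, by simpa [SatLit, Function.update_of_ne hne] using hsL⟩

lemma assign_atoms {T : Finset (Clause α)} {a : α} (b : Bool) :
    atomsOf (assign T a b) ⊆ (atomsOf T).erase a := by
  intro x hx
  obtain ⟨D, hD, c, hc⟩ := mem_atomsOf.1 hx
  obtain ⟨C, hC, rfl⟩ := Finset.mem_image.1 hD
  have hCT := (Finset.mem_filter.1 hC).1
  have hCb := (Finset.mem_filter.1 hC).2
  have hxc : (x, c) ∈ C := Finset.mem_of_mem_erase hc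
  refine Finset.mem_erase.2 ⟨?_, mem_atomsOf.2 ⟨C, hCT, c, hxc⟩⟩
  rintro rfl
  rcases Bool.eq_or_eq_not c b with hb | hb
  · exact hCb (by rw [← hb]; exact hxc)
  · exact (Finset.mem_erase.1 hc).1 (Prod.ext rfl hb)

lemma assign_lit_atom {T : Finset (Clause α)} {a : α} {b : Bool} {D : Clause α} {L : Lit α}
    (hD : D ∈ assign T a b) (hL : L ∈ D) : L.1 ≠ a := by
  intro hx
  have : L.1 ∈ atomsOf (assign T a b) := mem_atomsOf.2 ⟨D, hD, L.2, by exact hL⟩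
  rw [hx] at this
  exact (Finset.mem_erase.1 (assign_atoms b this)).1 rfl

lemma deriv_lift {T : Finset (Clause α)} {a : α} {b : Bool} {E : Clause α}
    (h : Deriv (↑(assign T a b)) E) :
    Deriv (↑T : Set (Clause α)) E ∨ Deriv (↑T : Set (Clause α)) (insert (a, !b) E) := by
  induction h with
  | @ax C hC =>
    have hC' : C ∈ assign T a b := hC
    obtain ⟨C₀, hC₀, rfl⟩ := Finset.mem_image.1 hC'
    have hC₀T := (Finset.mem_filter.1 hC₀).1
    by_cases hin : (a, !b) ∈ C₀
    · right
      rw [Finset.insert_erase hin]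
      exact Deriv.ax (Finset.mem_coe.2 hC₀T)
    · left
      rw [Finset.erase_eq_of_notMem hin]
      exact Deriv.ax (Finset.mem_coe.2 hC₀T)
  | @res C₁ C₂ L h1 h2 hL hcL ih1 ih2 =>
    have hL1 : L ≠ (a, !b) := by
      obtain ⟨C₀, hC₀, hLC₀⟩ := h1.lit_origin L hL
      intro e; exact assign_lit_atom (Finset.mem_coe.1 hC₀) hLC₀ (by rw [e])
    have hL2 : Lit.compl L ≠ (a, !b) := by
      obtain ⟨C₀, hC₀, hLC₀⟩ := h2.lit_origin _ hcL
      intro e; exact assign_lit_atom (Finset.mem_coe.1 hC₀) hLC₀ (by rw [e])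
    have key : ∀ (X Y : Clause α), Deriv (↑T : Set (Clause α)) X → Deriv (↑T : Set (Clause α)) Y →
        L ∈ X → Lit.compl L ∈ Y →
        (X = C₁ ∨ X = insert (a, !b) C₁) → (Y = C₂ ∨ Y = insert (a, !b) C₂) →
        Deriv (↑T : Set (Clause α)) ((C₁.erase L) ∪ (C₂.erase (Lit.compl L))) ∨
        Deriv (↑T : Set (Clause α)) (insert (a, !b) ((C₁.erase L) ∪ (C₂.erase (Lit.compl L)))) := by
      intro X Y dX dY hLX hLY hX hY
      have dR := Deriv.res dX dY hLX hLY
      rcases hX with rfl | rfl <;> rcases hY with rfl | rfl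
      · exact Or.inl dR
      · right
        have : (insert (a, !b) C₂).erase (Lit.compl L) = insert (a, !b) (C₂.erase (Lit.compl L)) :=
          Finset.erase_insert_of_ne (Ne.symm hL2)
        rwa [this, Finset.union_insert] at dR
      · right
        have : (insert (a, !b) C₁).erase L = insert (a, !b) (C₁.erase L) :=
          Finset.erase_insert_of_ne (Ne.symm hL1)
        rwa [this, Finset.insert_union] at dR
      · right
        have e1 : (insert (a, !b) C₁).erase L = insert (a, !b) (C₁.erase L) :=
          Finset.erase_insert_of_ne (Ne.symm hL1)
        have e2 : (insert (a, !b) C₂).erase (Lit.compl L) = insert (a, !b) (C₂.erase (Lit.compl L)) :=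
          Finset.erase_insert_of_ne (Ne.symm hL2)
        rw [e1, e2] at dR
        rwa [Finset.insert_union, Finset.union_insert, Finset.insert_idem] at dR
    rcases ih1 with d1 | d1 <;> rcases ih2 with d2 | d2
    · exact key _ _ d1 d2 hL hcL (Or.inl rfl) (Or.inl rfl)
    · exact key _ _ d1 d2 hL (Finset.mem_insert_of_mem hcL) (Or.inl rfl) (Or.inr rfl)
    · exact key _ _ d1 d2 (Finset.mem_insert_of_mem hL) hcL (Or.inr rfl) (Or.inl rfl)
    · exact key _ _ d1 d2 (Finset.mem_insert_of_mem hL) (Finset.mem_insert_of_mem hcL)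
        (Or.inr rfl) (Or.inr rfl)

/-- Completeness of resolution for finite clause sets. -/
lemma complete : ∀ (k : ℕ) (T : Finset (Clause α)), (atomsOf T).card ≤ k →
    ¬ Satisfiable (↑T : Set (Clause α)) → Deriv (↑T : Set (Clause α)) ∅ := by
  intro k
  induction k with
  | zero =>
    intro T hcard hT
    by_cases hemp : (∅ : Clause α) ∈ T
    · exact Deriv.ax (Finset.mem_coe.2 hemp)
    · exfalso
      apply hT
      refine ⟨fun _ => true, ?_⟩
      intro C hC
      have hCne : C ≠ ∅ := by rintro rfl; exact hemp (Finset.mem_coe.1 hC)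
      obtain ⟨L, hL⟩ := Finset.nonempty_iff_ne_empty.2 hCne
      exfalso
      have : L.1 ∈ atomsOf T := mem_atomsOf.2 ⟨C, Finset.mem_coe.1 hC, L.2, hL⟩
      rw [Finset.card_eq_zero.1 (Nat.le_zero.1 hcard)] at this
      simp at this
  | succ k ih =>
    intro T hcard hT
    by_cases hemp : (∅ : Clause α) ∈ T
    · exact Deriv.ax (Finset.mem_coe.2 hemp)
    by_cases hat : (atomsOf T) = ∅
    · exfalso
      apply hT
      refine ⟨fun _ => true, ?_⟩
      intro C hC
      have hCne : C ≠ ∅ := by rintro rfl; exact hemp (Finset.mem_coe.1 hC)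
      obtain ⟨L, hL⟩ := Finset.nonempty_iff_ne_empty.2 hCne
      exfalso
      have : L.1 ∈ atomsOf T := mem_atomsOf.2 ⟨C, Finset.mem_coe.1 hC, L.2, hL⟩
      rw [hat] at this; simp at this
    obtain ⟨a, ha⟩ := Finset.nonempty_iff_ne_empty.2 hat
    have hsub : ∀ b : Bool, (atomsOf (assign T a b)).card ≤ k := by
      intro b
      calc (atomsOf (assign T a b)).card ≤ ((atomsOf T).erase a).card :=
            Finset.card_le_card (assign_atoms b)
        _ = (atomsOf T).card - 1 := Finset.card_erase_of_mem ha
        _ ≤ k := by omega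
    have dtrue := ih (assign T a true) (hsub true) (assign_unsat true hT)
    have dfalse := ih (assign T a false) (hsub false) (assign_unsat false hT)
    rcases deriv_lift dtrue with d | d
    · exact d
    rcases deriv_lift dfalse with d' | d'
    · exact d'
    have hres := Deriv.res (L := (a, !true)) d d'
      (Finset.mem_insert_self _ _) (by simp [Lit.compl])
    have e : (Finset.erase (insert ((a : α), !true) ∅) (a, !true) ∪
        Finset.erase (insert ((a : α), !false) ∅) (Lit.compl (a, !true))) = (∅ : Clause α) := by
      simp [Lit.compl]
    rwa [e] at hres




/-- Alternating walks with endpoint bookkeeping: `f` is the first exit literal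
(if any), `m` the last entry literal (if any), `n` the number of clauses. -/
inductive AWalk (Z : Set (Clause α)) : Clause α → Clause α →
    Option (Lit α) → Option (Lit α) → ℕ → Prop
  | nil {E : Clause α} : E ∈ Z → AWalk Z E E none none 1
  | snoc {E F F' : Clause α} {f m : Option (Lit α)} {n : ℕ} {K : Lit α} :
      AWalk Z E F f m n → F' ∈ Z → K ∈ F → Lit.compl K ∈ F' →
      (∀ M ∈ m, K ≠ M) → AWalk Z E F' (some (f.getD K)) (some (Lit.compl K)) (n + 1)

lemma AWalk.mono {Z Z' : Set (Clause α)} (hZZ : Z ⊆ Z') {E F : Clause α}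
    {f m : Option (Lit α)} {n : ℕ} (h : AWalk Z E F f m n) : AWalk Z' E F f m n := by
  induction h with
  | nil hE => exact AWalk.nil (hZZ hE)
  | snoc w hF' hK hcK halt ih => exact AWalk.snoc ih (hZZ hF') hK hcK halt

lemma AWalk.none_inv {Z : Set (Clause α)} {E F : Clause α} {f : Option (Lit α)} {n : ℕ}
    (h : AWalk Z E F f none n) : E = F ∧ f = none ∧ n = 1 := by
  cases h with
  | nil hE => exact ⟨rfl, rfl, rfl⟩

lemma AWalk.glue {Z : Set (Clause α)} {E F F' E' : Clause α}
    {f₁ m₁ f₂ m₂ : Option (Lit α)} {n₁ n₂ : ℕ} {K : Lit α}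
    (h₁ : AWalk Z E F f₁ m₁ n₁) (h₂ : AWalk Z F' E' f₂ m₂ n₂)
    (hK : K ∈ F) (hcK : Lit.compl K ∈ F')
    (hr : ∀ M ∈ m₁, K ≠ M) (hl : ∀ X ∈ f₂, X ≠ Lit.compl K) :
    AWalk Z E E' (some (f₁.getD K)) (some (m₂.getD (Lit.compl K))) (n₁ + n₂) := by
  revert hl
  induction h₂ with
  | nil hE =>
    intro _
    simpa using AWalk.snoc h₁ hE hK hcK hr
  | @snoc G G' f₂' m₂' n₂' K' w hG' hK' hcK' halt ih =>
    intro hl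
    have hl' : ∀ X ∈ f₂', X ≠ Lit.compl K := by
      intro X hX
      have h0 : f₂'.getD K' ≠ Lit.compl K := hl _ rfl
      cases f₂' with
      | none => simp at hX
      | some Y =>
        simp only [Option.mem_def, Option.some.injEq] at hX
        subst hX
        simpa using h0
    have step := ih hl'
    have halt' : ∀ M ∈ (some (m₂'.getD (Lit.compl K))), K' ≠ M := by
      intro M hM
      simp only [Option.mem_def, Option.some.injEq] at hM
      subst hM
      cases m₂' with
      | none =>
        obtain ⟨rfl, rfl, rfl⟩ := w.none_inv
        simpa using hl (Option.getD none K') rfl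
      | some M' => exact halt M' rfl
    have hres := AWalk.snoc step hG' hK' hcK' halt'
    simpa [Nat.add_assoc] using hres

lemma getD_append_lt {X : Type} {l l' : List X} {i : ℕ} {d : X}
    (h : i < l.length) : (l ++ l').getD i d = l.getD i d := by
  simp [List.getD_eq_getElem?_getD, List.getElem?_append_left h]

lemma getD_concat_len {X : Type} {l : List X} {x d : X} :
    (l ++ [x]).getD l.length d = x := by
  simp [List.getD_eq_getElem?_getD, List.getElem?_append_right (le_refl l.length)]

lemma getLast?_getD {X : Type} {l : List X} {x d : X}
    (h : l.getLast? = some x) : l.getD (l.length - 1) d = x := by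
  rw [List.getLast?_eq_getElem?] at h
  simp [List.getD_eq_getElem?_getD, h]

lemma awalk_to_path {Z : Set (Clause α)} {E F : Clause α} {f m : Option (Lit α)} {n : ℕ}
    (h : AWalk Z E F f m n) :
    ∃ Ds ps, IsAltPath Z Ds ps ∧ Ds.head? = some E ∧ Ds.getLast? = some F ∧
      Ds.length = n ∧ ps.getLast?.map Prod.snd = m := by
  induction h with
  | nil hE =>
    refine ⟨[E], [], ⟨by simp, by simp, ?_, ?_, ?_⟩, by simp, by simp, by simp, by simp⟩
    · intro C hC; simp at hC; subst hC; exact hE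
    · intro i hi; simp at hi
    · intro i hi; simp at hi
  | @snoc F F' f m n K w hF' hK hcK halt ih =>
    obtain ⟨Ds, ps, ⟨hne, hplen, hmem, hedge, halt0⟩, hhead, hlast, hlen, hm⟩ := ih
    refine ⟨Ds ++ [F'], ps ++ [(K, Lit.compl K)], ⟨by simp, ?_, ?_, ?_, ?_⟩, ?_, ?_, ?_, ?_⟩
    · simp only [List.length_append, List.length_singleton]; omega
    · intro C hC
      rcases List.mem_append.1 hC with hC | hC
      · exact hmem C hC
      · simp at hC; subst hC; exact hF'
    · intro i hi
      have hi' : i < ps.length + 1 := by simpa using hi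
      by_cases hilt : i < ps.length
      · have hgeti : (ps ++ [(K, Lit.compl K)]).get ⟨i, hi⟩ = ps.get ⟨i, hilt⟩ := by
          simp [List.get_eq_getElem, List.getElem_append_left hilt]
        obtain ⟨e1, e2, e3⟩ := hedge i hilt
        have hi1 : i < Ds.length := by omega
        have hi2 : i + 1 < Ds.length := by omega
        rw [hgeti, getD_append_lt hi1, getD_append_lt hi2]
        exact ⟨e1, e2, e3⟩
      · have hieq : i = ps.length := by omega
        subst hieq
        have hgeti : (ps ++ [(K, Lit.compl K)]).get ⟨ps.length, hi⟩ = (K, Lit.compl K) := by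
          simp [List.get_eq_getElem]
        rw [hgeti]
        have h1 : ps.length < Ds.length := by omega
        have hDlen : ps.length = Ds.length - 1 := by omega
        refine ⟨?_, ?_, rfl⟩
        · rw [getD_append_lt h1, hDlen, getLast?_getD hlast]; exact hK
        · have : ps.length + 1 = Ds.length := hplen
          rw [this, getD_concat_len]; exact hcK
    · intro i hi
      have hi' : i + 1 < ps.length + 1 := by simpa using hi
      by_cases h2 : i + 1 < ps.length
      · have g1 : (ps ++ [(K, Lit.compl K)]).get ⟨i + 1, hi⟩ = ps.get ⟨i + 1, h2⟩ := by
          simp [List.get_eq_getElem, List.getElem_append_left h2]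
        have hilt : i < ps.length := by omega
        have g2 : (ps ++ [(K, Lit.compl K)]).get ⟨i, Nat.lt_of_succ_lt hi⟩ = ps.get ⟨i, hilt⟩ := by
          simp [List.get_eq_getElem, List.getElem_append_left hilt]
        rw [g1, g2]
        exact halt0 i h2
      · have hieq : i + 1 = ps.length := by omega
        have hilt : i < ps.length := by omega
        have g1 : (ps ++ [(K, Lit.compl K)]).get ⟨i + 1, hi⟩ = (K, Lit.compl K) := by
          simp [List.get_eq_getElem, hieq]
        have g2 : (ps ++ [(K, Lit.compl K)]).get ⟨i, Nat.lt_of_succ_lt hi⟩ = ps.get ⟨i, hilt⟩ := by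
          simp [List.get_eq_getElem, List.getElem_append_left hilt]
        rw [g1, g2]
        have hlast_ps : ps.getLast? = some (ps.get ⟨i, hilt⟩) := by
          rw [List.getLast?_eq_getElem?]
          have : ps.length - 1 = i := by omega
          rw [this]
          simp [List.get_eq_getElem, List.getElem?_eq_getElem hilt]
        have hm' : m = some ((ps.get ⟨i, hilt⟩).2) := by
          rw [← hm, hlast_ps]; rfl
        have hmem2 : (ps.get ⟨i, hilt⟩).2 ∈ m := by rw [hm']; rfl
        exact halt _ hmem2
    · cases Ds with
      | nil => simp at hne
      | cons a t => simpa using hhead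
    · simp [List.getLast?_concat]
    · simp [hlen]
    · simp [List.getLast?_concat]

lemma good_getD {m : Option (Lit α)} {L d : Lit α} (hs : ∀ M ∈ m, L ≠ M) (hd : L ≠ d) :
    ∀ M ∈ (some (m.getD d) : Option (Lit α)), L ≠ M := by
  intro M hM
  simp only [Option.mem_def, Option.some.injEq] at hM
  subst hM
  cases m with
  | none => exact hd
  | some M' => exact hs M' rfl

lemma good_getD' {f : Option (Lit α)} {L d : Lit α} (hs : ∀ X ∈ f, X ≠ L) (hd : d ≠ L) :
    ∀ X ∈ (some (f.getD d) : Option (Lit α)), X ≠ L := by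
  intro X hX
  simp only [Option.mem_def, Option.some.injEq] at hX
  subst hX
  cases f with
  | none => exact hd
  | some X' => exact hs X' rfl

lemma deriv_struct {T : Set (Clause α)} {C : Clause α} (h : Deriv T C) :
    ∃ Z : Set (Clause α), Z ⊆ T ∧
      (∀ v, SatSet v Z → SatClause v C) ∧
      (∀ E ∈ Z, ∀ E' ∈ Z, ∃ f m k, AWalk Z E E' f m k) ∧
      (∀ E ∈ Z, ∀ L ∈ C, ∃ F ∈ Z, L ∈ F ∧
        ∃ f m k, AWalk Z E F f m k ∧ ∀ M ∈ m, L ≠ M) ∧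
      (∀ E ∈ Z, ∀ L ∈ C, ∃ F ∈ Z, L ∈ F ∧
        ∃ f m k, AWalk Z F E f m k ∧ ∀ X ∈ f, X ≠ L) ∧
      (∀ L ∈ C, ∀ L' ∈ C, L ≠ L' → ∃ F ∈ Z, ∃ F' ∈ Z, L ∈ F ∧ L' ∈ F' ∧
        ∃ f m k, AWalk Z F F' f m k ∧ (∀ X ∈ f, X ≠ L) ∧ (∀ M ∈ m, L' ≠ M)) := by
  induction h with
  | @ax C hC =>
    have hCZ : C ∈ ({C} : Set (Clause α)) := rfl
    refine ⟨{C}, by simpa using hC, ?_, ?_, ?_, ?_, ?_⟩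
    · intro v hv; exact hv C hCZ
    · intro E hE E' hE'
      rcases hE; rcases hE'
      exact ⟨none, none, 1, AWalk.nil hCZ⟩
    · intro E hE L hL
      rcases hE
      exact ⟨C, hCZ, hL, none, none, 1, AWalk.nil hCZ, by simp⟩
    · intro E hE L hL
      rcases hE
      exact ⟨C, hCZ, hL, none, none, 1, AWalk.nil hCZ, by simp⟩
    · intro L hL L' hL' _
      exact ⟨C, hCZ, C, hCZ, hL, hL', none, none, 1, AWalk.nil hCZ, by simp, by simp⟩
  | @res C₁ C₂ L h1 h2 hL hcL ih1 ih2 =>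
    obtain ⟨Z₁, hZ₁T, ha1, hd1, hb1, hb1', hc1⟩ := ih1
    obtain ⟨Z₂, hZ₂T, ha2, hd2, hb2, hb2', hc2⟩ := ih2
    have hsub1 : Z₁ ⊆ Z₁ ∪ Z₂ := Set.subset_union_left
    have hsub2 : Z₂ ⊆ Z₁ ∪ Z₂ := Set.subset_union_right
    refine ⟨Z₁ ∪ Z₂, Set.union_subset hZ₁T hZ₂T, ?_, ?_, ?_, ?_, ?_⟩
    · intro v hv
      exact satClause_resolvent (ha1 v (fun X hX => hv X (hsub1 hX)))
        (ha2 v (fun X hX => hv X (hsub2 hX)))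
    · -- pairwise connectivity
      intro E hE E' hE'
      rcases hE with hE1 | hE2 <;> rcases hE' with hE'1 | hE'2
      · obtain ⟨f, m, k, w⟩ := hd1 E hE1 E' hE'1
        exact ⟨f, m, k, w.mono hsub1⟩
      · obtain ⟨F, hF, hLF, f1, m1, k1, w1, g1⟩ := hb1 E hE1 L hL
        obtain ⟨F2, hF2, hLF2, f2, m2, k2, w2, g2⟩ := hb2' E' hE'2 (Lit.compl L) hcL
        exact ⟨_, _, _, AWalk.glue (w1.mono hsub1) (w2.mono hsub2) hLF hLF2 g1 g2⟩
      · obtain ⟨F, hF, hLF, f1, m1, k1, w1, g1⟩ := hb2 E hE2 (Lit.compl L) hcL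
        obtain ⟨F2, hF2, hLF2, f2, m2, k2, w2, g2⟩ := hb1' E' hE'1 L hL
        have hcc : Lit.compl (Lit.compl L) ∈ F2 := by rw [compl_compl]; exact hLF2
        have g2' : ∀ X ∈ f2, X ≠ Lit.compl (Lit.compl L) := by
          intro X hX; rw [compl_compl]; exact g2 X hX
        exact ⟨_, _, _, AWalk.glue (w1.mono hsub2) (w2.mono hsub1) hLF hcc g1 g2'⟩
      · obtain ⟨f, m, k, w⟩ := hd2 E hE2 E' hE'2
        exact ⟨f, m, k, w.mono hsub2⟩
    · -- right-good walks to an origin of each literal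
      intro E hE L₀ hL₀
      rcases Finset.mem_union.1 hL₀ with hL₀1 | hL₀2
      · have hL₀C₁ : L₀ ∈ C₁ := Finset.mem_of_mem_erase hL₀1
        have hL₀ne : L₀ ≠ L := (Finset.mem_erase.1 hL₀1).1
        rcases hE with hE1 | hE2
        · obtain ⟨F, hF, hLF, f, m, k, w, g⟩ := hb1 E hE1 L₀ hL₀C₁
          exact ⟨F, hsub1 hF, hLF, f, m, k, w.mono hsub1, g⟩
        · obtain ⟨F2, hF2, hcLF2, f2, m2, k2, w2, g2⟩ := hb2 E hE2 (Lit.compl L) hcL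
          obtain ⟨F, hF, F', hF', hLF, hL₀F', f, m, k, wc, gl, gr⟩ :=
            hc1 L hL L₀ hL₀C₁ (Ne.symm hL₀ne)
          have hcc : Lit.compl (Lit.compl L) ∈ F := by rw [compl_compl]; exact hLF
          have gl' : ∀ X ∈ f, X ≠ Lit.compl (Lit.compl L) := by
            intro X hX; rw [compl_compl]; exact gl X hX
          have wglue := AWalk.glue (w2.mono hsub2) (wc.mono hsub1) hcLF2 hcc g2 gl'
          refine ⟨F', hsub1 hF', hL₀F', _, _, _, wglue, ?_⟩
          have hd : L₀ ≠ Lit.compl (Lit.compl L) := by rw [compl_compl]; exact hL₀ne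
          exact good_getD gr hd
      · have hL₀C₂ : L₀ ∈ C₂ := Finset.mem_of_mem_erase hL₀2
        have hL₀ne : L₀ ≠ Lit.compl L := (Finset.mem_erase.1 hL₀2).1
        rcases hE with hE1 | hE2
        · obtain ⟨F1, hF1, hLF1, f1, m1, k1, w1, g1⟩ := hb1 E hE1 L hL
          obtain ⟨F, hF, F', hF', hLF, hL₀F', f, m, k, wc, gl, gr⟩ :=
            hc2 (Lit.compl L) hcL L₀ hL₀C₂ (Ne.symm hL₀ne)
          have wglue := AWalk.glue (w1.mono hsub1) (wc.mono hsub2) hLF1 hLF g1 gl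
          refine ⟨F', hsub2 hF', hL₀F', _, _, _, wglue, good_getD gr hL₀ne⟩
        · obtain ⟨F, hF, hLF, f, m, k, w, g⟩ := hb2 E hE2 L₀ hL₀C₂
          exact ⟨F, hsub2 hF, hLF, f, m, k, w.mono hsub2, g⟩
    · -- left-good walks from an origin of each literal
      intro E hE L₀ hL₀
      rcases Finset.mem_union.1 hL₀ with hL₀1 | hL₀2
      · have hL₀C₁ : L₀ ∈ C₁ := Finset.mem_of_mem_erase hL₀1
        have hL₀ne : L₀ ≠ L := (Finset.mem_erase.1 hL₀1).1
        rcases hE with hE1 | hE2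
        · obtain ⟨F, hF, hLF, f, m, k, w, g⟩ := hb1' E hE1 L₀ hL₀C₁
          exact ⟨F, hsub1 hF, hLF, f, m, k, w.mono hsub1, g⟩
        · obtain ⟨F, hF, F', hF', hL₀F, hLF', f, m, k, wc, gl, gr⟩ :=
            hc1 L₀ hL₀C₁ L hL hL₀ne
          obtain ⟨F2, hF2, hcLF2, f2, m2, k2, w2, g2⟩ := hb2' E hE2 (Lit.compl L) hcL
          have wglue := AWalk.glue (wc.mono hsub1) (w2.mono hsub2) hLF' hcLF2 gr g2
          refine ⟨F, hsub1 hF, hL₀F, _, _, _, wglue, good_getD' gl (Ne.symm hL₀ne)⟩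
      · have hL₀C₂ : L₀ ∈ C₂ := Finset.mem_of_mem_erase hL₀2
        have hL₀ne : L₀ ≠ Lit.compl L := (Finset.mem_erase.1 hL₀2).1
        rcases hE with hE1 | hE2
        · obtain ⟨F, hF, F', hF', hL₀F, hcLF', f, m, k, wc, gl, gr⟩ :=
            hc2 L₀ hL₀C₂ (Lit.compl L) hcL hL₀ne
          obtain ⟨F1, hF1, hLF1, f1, m1, k1, w1, g1⟩ := hb1' E hE1 L hL
          have hcc : Lit.compl (Lit.compl L) ∈ F1 := by rw [compl_compl]; exact hLF1
          have g1' : ∀ X ∈ f1, X ≠ Lit.compl (Lit.compl L) := by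
            intro X hX; rw [compl_compl]; exact g1 X hX
          have wglue := AWalk.glue (wc.mono hsub2) (w1.mono hsub1) hcLF' hcc gr g1'
          refine ⟨F, hsub2 hF, hL₀F, _, _, _, wglue, good_getD' gl (Ne.symm hL₀ne)⟩
        · obtain ⟨F, hF, hLF, f, m, k, w, g⟩ := hb2' E hE2 L₀ hL₀C₂
          exact ⟨F, hsub2 hF, hLF, f, m, k, w.mono hsub2, g⟩
    · -- two-sided good walks between origins of pairs of literals
      intro L₀ hL₀ L₀' hL₀' hne
      rcases Finset.mem_union.1 hL₀ with hL₀1 | hL₀2 <;>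
        rcases Finset.mem_union.1 hL₀' with hL₀'1 | hL₀'2
      · obtain ⟨F, hF, F', hF', m1, m2, f, m, k, w, gl, gr⟩ :=
          hc1 L₀ (Finset.mem_of_mem_erase hL₀1) L₀' (Finset.mem_of_mem_erase hL₀'1) hne
        exact ⟨F, hsub1 hF, F', hsub1 hF', m1, m2, f, m, k, w.mono hsub1, gl, gr⟩
      · -- L₀ from C₁, L₀' from C₂
        have e1 : L₀ ≠ L := (Finset.mem_erase.1 hL₀1).1
        have e2 : L₀' ≠ Lit.compl L := (Finset.mem_erase.1 hL₀'2).1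
        obtain ⟨F, hF, F1, hF1, hL₀F, hLF1, f1, mm1, k1, w1, gl1, gr1⟩ :=
          hc1 L₀ (Finset.mem_of_mem_erase hL₀1) L hL e1
        obtain ⟨F2, hF2, F', hF', hcLF2, hL₀'F', f2, mm2, k2, w2, gl2, gr2⟩ :=
          hc2 (Lit.compl L) hcL L₀' (Finset.mem_of_mem_erase hL₀'2) (Ne.symm e2)
        have wglue := AWalk.glue (w1.mono hsub1) (w2.mono hsub2) hLF1 hcLF2 gr1 gl2
        exact ⟨F, hsub1 hF, F', hsub2 hF', hL₀F, hL₀'F', _, _, _, wglue,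
          good_getD' gl1 (Ne.symm e1), good_getD gr2 e2⟩
      · -- L₀ from C₂, L₀' from C₁
        have e1 : L₀ ≠ Lit.compl L := (Finset.mem_erase.1 hL₀2).1
        have e2 : L₀' ≠ L := (Finset.mem_erase.1 hL₀'1).1
        obtain ⟨F, hF, F2, hF2, hL₀F, hcLF2, f1, mm1, k1, w1, gl1, gr1⟩ :=
          hc2 L₀ (Finset.mem_of_mem_erase hL₀2) (Lit.compl L) hcL e1
        obtain ⟨F1, hF1, F', hF', hLF1, hL₀'F', f2, mm2, k2, w2, gl2, gr2⟩ :=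
          hc1 L hL L₀' (Finset.mem_of_mem_erase hL₀'1) (Ne.symm e2)
        have hcc : Lit.compl (Lit.compl L) ∈ F1 := by rw [compl_compl]; exact hLF1
        have gl2' : ∀ X ∈ f2, X ≠ Lit.compl (Lit.compl L) := by
          intro X hX; rw [compl_compl]; exact gl2 X hX
        have wglue := AWalk.glue (w1.mono hsub2) (w2.mono hsub1) hcLF2 hcc gr1 gl2'
        refine ⟨F, hsub2 hF, F', hsub1 hF', hL₀F, hL₀'F', _, _, _, wglue,
          good_getD' gl1 (Ne.symm e1), ?_⟩
        have hd : L₀' ≠ Lit.compl (Lit.compl L) := by rw [compl_compl]; exact e2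
        exact good_getD gr2 hd
      · obtain ⟨F, hF, F', hF', m1, m2, f, m, k, w, gl, gr⟩ :=
          hc2 L₀ (Finset.mem_of_mem_erase hL₀2) L₀' (Finset.mem_of_mem_erase hL₀'2) hne
        exact ⟨F, hsub2 hF, F', hsub2 hF', m1, m2, f, m, k, w.mono hsub2, gl, gr⟩

lemma head?_take {X : Type} {l : List X} {n : ℕ} (hn : 0 < n) : (l.take n).head? = l.head? := by
  cases l with
  | nil => simp
  | cons a t =>
    cases n with
    | zero => omega
    | succ n => simp

lemma getLast?_take {X : Type} {d : X} {l : List X} {i : ℕ} (hi : i < l.length) :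
    (l.take (i+1)).getLast? = some (l.getD i d) := by
  rw [List.getLast?_eq_getElem?, List.length_take]
  have e : min (i+1) l.length - 1 = i := by omega
  rw [e, List.getElem?_take, if_pos (by omega), List.getElem?_eq_getElem hi,
    List.getD_eq_getElem _ _ hi]

lemma head?_drop {X : Type} {d : X} {l : List X} {j : ℕ} (hj : j < l.length) :
    (l.drop j).head? = some (l.getD j d) := by
  rw [List.head?_eq_getElem?, List.getElem?_drop, List.getD_eq_getElem _ _ hj,
    ← List.getElem?_eq_getElem]
  simp

lemma getLast?_drop' {X : Type} {l : List X} {j : ℕ} (hj : j < l.length) :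
    (l.drop j).getLast? = l.getLast? := by
  rw [List.getLast?_eq_getElem?, List.getLast?_eq_getElem?, List.length_drop,
    List.getElem?_drop]
  congr 1
  omega

lemma altPath_take {Z : Set (Clause α)} {Ds : List (Clause α)} {ps : List (Lit α × Lit α)}
    (h : IsAltPath Z Ds ps) {i : ℕ} (hi : i < Ds.length) :
    IsAltPath Z (Ds.take (i+1)) (ps.take i) := by
  obtain ⟨hne, hlen, hmem, hedge, halt⟩ := h
  refine ⟨?_, ?_, ?_, ?_, ?_⟩
  · have hL : (Ds.take (i+1)).length = i+1 := by rw [List.length_take]; omega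
    intro hnil; rw [hnil] at hL; simp at hL
  · rw [List.length_take, List.length_take]; omega
  · intro C hC; exact hmem C (List.take_subset _ _ hC)
  · intro t ht
    have ht2 : t < i := by rw [List.length_take] at ht; omega
    have ht' : t < ps.length := by rw [List.length_take] at ht; omega
    have g : (ps.take i).get ⟨t, ht⟩ = ps.get ⟨t, ht'⟩ := by
      simp [List.get_eq_getElem, List.getElem_take]
    have d1 : (Ds.take (i+1)).getD t ∅ = Ds.getD t ∅ := by
      rw [List.getD_eq_getElem?_getD, List.getElem?_take, if_pos (by omega),
        ← List.getD_eq_getElem?_getD]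
    have d2 : (Ds.take (i+1)).getD (t+1) ∅ = Ds.getD (t+1) ∅ := by
      rw [List.getD_eq_getElem?_getD, List.getElem?_take, if_pos (by omega),
        ← List.getD_eq_getElem?_getD]
    rw [g, d1, d2]
    exact hedge t ht'
  · intro t ht
    have ht2 : t + 1 < i := by rw [List.length_take] at ht; omega
    have ht' : t + 1 < ps.length := by rw [List.length_take] at ht; omega
    have g1 : (ps.take i).get ⟨t+1, ht⟩ = ps.get ⟨t+1, ht'⟩ := by
      simp [List.get_eq_getElem, List.getElem_take]
    have g2 : (ps.take i).get ⟨t, Nat.lt_of_succ_lt ht⟩ = ps.get ⟨t, Nat.lt_of_succ_lt ht'⟩ := by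
      simp [List.get_eq_getElem, List.getElem_take]
    rw [g1, g2]
    exact halt t ht'

lemma altPath_drop {Z : Set (Clause α)} {Ds : List (Clause α)} {ps : List (Lit α × Lit α)}
    (h : IsAltPath Z Ds ps) {j : ℕ} (hj : j < Ds.length) :
    IsAltPath Z (Ds.drop j) (ps.drop j) := by
  obtain ⟨hne, hlen, hmem, hedge, halt⟩ := h
  have hjp : j ≤ ps.length := by omega
  refine ⟨?_, ?_, ?_, ?_, ?_⟩
  · have hL : (Ds.drop j).length = Ds.length - j := by rw [List.length_drop]
    intro hnil; rw [hnil] at hL; simp at hL; omega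
  · rw [List.length_drop, List.length_drop]; omega
  · intro C hC; exact hmem C (List.drop_subset _ _ hC)
  · intro t ht
    have ht' : j + t < ps.length := by rw [List.length_drop] at ht; omega
    have g : (ps.drop j).get ⟨t, ht⟩ = ps.get ⟨j + t, ht'⟩ := by
      simp [List.get_eq_getElem, List.getElem_drop]
    have d1 : (Ds.drop j).getD t ∅ = Ds.getD (j + t) ∅ := by
      rw [List.getD_eq_getElem?_getD, List.getElem?_drop, ← List.getD_eq_getElem?_getD]
    have d2 : (Ds.drop j).getD (t+1) ∅ = Ds.getD (j + t + 1) ∅ := by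
      rw [List.getD_eq_getElem?_getD, List.getElem?_drop, ← List.getD_eq_getElem?_getD,
        ← Nat.add_assoc]
    rw [g, d1, d2]
    exact hedge (j + t) ht'
  · intro t ht
    have ht' : j + t + 1 < ps.length := by rw [List.length_drop] at ht; omega
    have g1 : (ps.drop j).get ⟨t+1, ht⟩ = ps.get ⟨j + t + 1, ht'⟩ := by
      simp only [List.get_eq_getElem, List.getElem_drop]
      congr 1
    have g2 : (ps.drop j).get ⟨t, Nat.lt_of_succ_lt ht⟩ =
        ps.get ⟨j + t, Nat.lt_of_succ_lt ht'⟩ := by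
      simp [List.get_eq_getElem, List.getElem_drop]
    rw [g1, g2]
    exact halt (j + t) ht'

lemma altPath_splice {Z : Set (Clause α)} {Ds : List (Clause α)} {ps : List (Lit α × Lit α)}
    (h : IsAltPath Z Ds ps) {i j : ℕ} (h0 : 1 ≤ i) (hij : i < j) (hj : j < ps.length)
    (hi1 : i - 1 < ps.length)
    (heq : Ds.getD i ∅ = Ds.getD j ∅)
    (hjun : (ps.get ⟨j, hj⟩).1 ≠ (ps.get ⟨i - 1, hi1⟩).2) :
    IsAltPath Z (Ds.take (i+1) ++ Ds.drop (j+1)) (ps.take i ++ ps.drop j) := by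
  obtain ⟨hne, hlen, hmem, hedge, halt⟩ := h
  have hiD : i + 1 ≤ Ds.length := by omega
  have hPlen : (ps.take i).length = i := by rw [List.length_take]; omega
  have hAlen : (Ds.take (i+1)).length = i + 1 := by rw [List.length_take]; omega
  have hQlen : (ps.drop j).length = ps.length - j := by rw [List.length_drop]
  have hBlen : (Ds.drop (j+1)).length = Ds.length - (j+1) := by rw [List.length_drop]
  have hps'len : (ps.take i ++ ps.drop j).length = i + (ps.length - j) := by
    rw [List.length_append, hPlen, hQlen]
  have hDs'len : (Ds.take (i+1) ++ Ds.drop (j+1)).length = (i+1) + (Ds.length - (j+1)) := by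
    rw [List.length_append, hAlen, hBlen]
  -- getD facts
  have dlow : ∀ t, t ≤ i → (Ds.take (i+1) ++ Ds.drop (j+1)).getD t ∅ = Ds.getD t ∅ := by
    intro t ht
    rw [List.getD_eq_getElem?_getD, List.getElem?_append_left (by rw [hAlen]; omega),
      List.getElem?_take, if_pos (by omega), ← List.getD_eq_getElem?_getD]
  have dhigh : ∀ t, i < t → (Ds.take (i+1) ++ Ds.drop (j+1)).getD t ∅ = Ds.getD (j + t - i) ∅ := by
    intro t ht
    rw [List.getD_eq_getElem?_getD, List.getElem?_append_right (by rw [hAlen]; omega),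
      List.getElem?_drop, hAlen]
    have e : j + 1 + (t - (i + 1)) = j + t - i := by omega
    rw [e, ← List.getD_eq_getElem?_getD]
  have dmid : (Ds.take (i+1) ++ Ds.drop (j+1)).getD i ∅ = Ds.getD j ∅ := by
    rw [dlow i le_rfl, heq]
  -- ps get facts
  have plow : ∀ t (ht : t < i) (h' : t < (ps.take i ++ ps.drop j).length)
      (h'' : t < ps.length),
      (ps.take i ++ ps.drop j).get ⟨t, h'⟩ = ps.get ⟨t, h''⟩ := by
    intro t ht h' h''
    rw [List.get_eq_getElem,
      List.getElem_append_left (as := ps.take i) (bs := ps.drop j) (i := t)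
        (by rw [hPlen]; omega),
      List.getElem_take, List.get_eq_getElem]
  have phigh : ∀ t (ht : i ≤ t) (h' : t < (ps.take i ++ ps.drop j).length)
      (h'' : j + t - i < ps.length),
      (ps.take i ++ ps.drop j).get ⟨t, h'⟩ = ps.get ⟨j + t - i, h''⟩ := by
    intro t ht h' h''
    rw [List.get_eq_getElem,
      List.getElem_append_right (as := ps.take i) (bs := ps.drop j) (i := t)
        (by rw [hPlen]; omega),
      List.get_eq_getElem]
    rw [List.getElem_drop]
    congr 1
    rw [hPlen]
    show j + (t - i) = j + t - i
    omega
  refine ⟨?_, ?_, ?_, ?_, ?_⟩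
  · intro hnil
    have : (Ds.take (i+1) ++ Ds.drop (j+1)).length = 0 := by rw [hnil]; rfl
    rw [hDs'len] at this; omega
  · rw [hps'len, hDs'len]; omega
  · intro C hC
    rcases List.mem_append.1 hC with hC | hC
    · exact hmem C (List.take_subset _ _ hC)
    · exact hmem C (List.drop_subset _ _ hC)
  · intro t ht
    by_cases htl : t < i
    · rw [plow t htl ht (by omega), dlow t (by omega), dlow (t+1) (by omega)]
      exact hedge t (by omega)
    · push_neg at htl
      have ht' : t < i + (ps.length - j) := by rw [hps'len] at ht; exact ht
      have hu : j + t - i < ps.length := by omega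
      rw [phigh t htl ht hu]
      by_cases hti : t = i
      · have h1 := (hedge (j + t - i) hu).1
        have h2 := (hedge (j + t - i) hu).2.1
        have dmid' : (Ds.take (i+1) ++ Ds.drop (j+1)).getD t ∅ = Ds.getD j ∅ := by
          rw [hti]; exact dmid
        refine ⟨?_, ?_, (hedge (j + t - i) hu).2.2⟩
        · rw [dmid']
          convert h1 using 2
          omega
        · rw [dhigh (t+1) (by omega)]
          convert h2 using 2
          omega
      · have hti' : i < t := by omega
        rw [dhigh t hti', dhigh (t+1) (by omega)]
        have e2 : j + (t + 1) - i = (j + t - i) + 1 := by omega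
        rw [e2]
        exact hedge (j + t - i) hu
  · intro t ht
    have ht' : t + 1 < i + (ps.length - j) := by rw [hps'len] at ht; exact ht
    by_cases h1 : t + 1 < i
    · rw [plow (t+1) h1 ht (by omega), plow t (by omega) (Nat.lt_of_succ_lt ht) (by omega)]
      exact halt t (by omega)
    · by_cases h2 : t + 1 = i
      · rw [phigh (t+1) (by omega) ht (by omega), plow t (by omega) (Nat.lt_of_succ_lt ht) (by omega)]
        have e : j + (t + 1) - i = j := by omega
        have e2 : t = i - 1 := by omega
        simp only [e]
        simp only [e2]
        exact hjun
      · have h3 : i ≤ t := by omega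
        rw [phigh (t+1) (by omega) ht (by omega), phigh t h3 (Nat.lt_of_succ_lt ht) (by omega)]
        have e2 : j + (t + 1) - i = (j + t - i) + 1 := by omega
        have hu : j + t - i + 1 < ps.length := by omega
        simp only [e2]
        exact halt (j + t - i) hu


lemma mu_connected {T' : Set (Clause α)} (hfin : T'.Finite) (hmu : MinimalUnsat T') :
    ∀ C ∈ T', ∀ D ∈ T', ∃ k, AltPathFromTo T' C D k := by
  have hTT : (↑hfin.toFinset : Set (Clause α)) = T' := hfin.coe_toFinset
  have hder : Deriv T' (∅ : Clause α) := by
    have h1 : ¬ Satisfiable (↑hfin.toFinset : Set (Clause α)) := by rw [hTT]; exact hmu.1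
    have h2 := complete (atomsOf hfin.toFinset).card hfin.toFinset le_rfl h1
    rwa [hTT] at h2
  obtain ⟨Z, hZT, ha, hd, -, -, -⟩ := deriv_struct hder
  have hZunsat : ¬ Satisfiable Z := by
    rintro ⟨v, hv⟩
    exact not_satClause_empty v (ha v hv)
  have hZeq : Z = T' := by
    by_contra hne
    exact hZunsat (hmu.2 Z (HasSubset.Subset.ssubset_of_ne hZT hne))
  subst hZeq
  intro C hC D hD
  obtain ⟨f, m, k, w⟩ := hd C hC D hD
  obtain ⟨Ds, ps, hap, hh, hl, hlen, -⟩ := awalk_to_path w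
  exact ⟨Ds.length, Ds, ps, hap, hh, hl, rfl⟩

lemma seq_sound {S : Set (Clause α)} {Cs : List (Clause α)} (hseq : IsResolutionSeq S Cs)
    {v : α → Bool} (hv : SatSet v S) : ∀ i, ∀ h : i < Cs.length, SatClause v (Cs.get ⟨i, h⟩) := by
  intro i
  induction i using Nat.strong_induction_on with
  | _ i ih =>
    intro h
    rcases hseq i h with hin | ⟨j, k, L, hj, hk, hL1, hL2, hDeq⟩
    · exact hv _ hin
    · have hjl : j < Cs.length := lt_trans hj h
      have hkl : k < Cs.length := lt_trans hk h
      rw [hDeq, List.getD_eq_getElem _ _ hjl, List.getD_eq_getElem _ _ hkl]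
      exact satClause_resolvent (ih j hj hjl) (ih k hk hkl)

lemma refutation_unsat {S : Set (Clause α)} {Cs : List (Clause α)} {n : ℕ}
    (h : IsRefutation S Cs n) : ¬ Satisfiable S := by
  rintro ⟨v, hv⟩
  obtain ⟨hseq, hlen, hlast⟩ := h
  have hne : Cs ≠ [] := by rintro rfl; simp at hlast
  have hpos : 0 < Cs.length := List.length_pos_iff.2 hne
  have hl : Cs.length - 1 < Cs.length := by omega
  have hget : Cs.get ⟨Cs.length - 1, hl⟩ = ∅ := by
    rw [List.getLast?_eq_getElem?, List.getElem?_eq_getElem hl] at hlast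
    exact Option.some_injective _ hlast
  have hs := seq_sound hseq hv (Cs.length - 1) hl
  rw [hget] at hs
  exact not_satClause_empty v hs

lemma seq_restrict {S : Set (Clause α)} {Cs : List (Clause α)} (hseq : IsResolutionSeq S Cs) :
    IsResolutionSeq ((↑Cs.toFinset : Set (Clause α)) ∩ S) Cs := by
  intro i h
  rcases hseq i h with hin | hres
  · left
    refine ⟨?_, hin⟩
    simp only [Finset.coe_sort_coe, Finset.mem_coe, List.mem_toFinset]
    exact List.get_mem _ _
  · right; exact hres

lemma exists_mu : ∀ (N : ℕ) (T : Set (Clause α)), T.Finite → T.ncard ≤ N →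
    ¬ Satisfiable T → ∃ T', T' ⊆ T ∧ T'.Finite ∧ MinimalUnsat T' := by
  intro N
  induction N with
  | zero =>
    intro T hfin hcard hunsat
    refine ⟨T, subset_rfl, hfin, hunsat, ?_⟩
    intro U hU
    exfalso
    have hTe : T = ∅ := (Set.ncard_eq_zero hfin).1 (Nat.le_zero.1 hcard)
    rw [hTe] at hU
    exact (not_ssubset_of_subset (Set.empty_subset U)) hU
  | succ N ih =>
    intro T hfin hcard hunsat
    by_cases hmin : ∀ U, U ⊂ T → Satisfiable U
    · exact ⟨T, subset_rfl, hfin, hunsat, hmin⟩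
    · push_neg at hmin
      obtain ⟨U, hUT, hUunsat⟩ := hmin
      have hUfin : U.Finite := hfin.subset hUT.subset
      have hcard' : U.ncard ≤ N := by
        have := Set.ncard_lt_ncard hUT hfin
        omega
      obtain ⟨T', h1, h2, h3⟩ := ih U hUfin hcard' hUunsat
      exact ⟨T', h1.trans hUT.subset, h2, h3⟩


lemma head?_append_left {X : Type} {A B : List X} (h : A ≠ []) : (A ++ B).head? = A.head? := by
  cases A with
  | nil => simp at h
  | cons a t => simp

lemma getLast?_append_right {X : Type} {A B : List X} (h : B ≠ []) :
    (A ++ B).getLast? = B.getLast? := by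
  have hB : 0 < B.length := List.length_pos_iff.2 h
  rw [List.getLast?_eq_getElem?, List.getLast?_eq_getElem? (l := B), List.length_append,
    List.getElem?_append_right (by omega)]
  congr 1
  omega

lemma three_distinct {s : Finset ℕ} (h : 2 < s.card) :
    ∃ a b c, a ∈ s ∧ b ∈ s ∧ c ∈ s ∧ a < b ∧ b < c := by
  obtain ⟨a, ha⟩ := Finset.card_pos.1 (show 0 < s.card by omega)
  have h2 : 1 < (s.erase a).card := by rw [Finset.card_erase_of_mem ha]; omega
  obtain ⟨b, hb, c, hc, hbc⟩ := Finset.one_lt_card.1 h2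
  have hb' : b ∈ s := Finset.mem_of_mem_erase hb
  have hc' : c ∈ s := Finset.mem_of_mem_erase hc
  have hba : b ≠ a := (Finset.mem_erase.1 hb).1
  have hca : c ≠ a := (Finset.mem_erase.1 hc).1
  rcases lt_trichotomy a b with h1 | h1 | h1
  · rcases lt_trichotomy b c with h2' | h2' | h2'
    · exact ⟨a, b, c, ha, hb', hc', h1, h2'⟩
    · exact absurd h2' hbc
    · rcases lt_trichotomy a c with h3 | h3 | h3
      · exact ⟨a, c, b, ha, hc', hb', h3, h2'⟩
      · exact absurd h3.symm hca
      · exact ⟨c, a, b, hc', ha, hb', h3, h1⟩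
  · exact absurd h1.symm hba
  · rcases lt_trichotomy a c with h3 | h3 | h3
    · exact ⟨b, a, c, hb', ha, hc', h1, h3⟩
    · exact absurd h3.symm hca
    · rcases lt_trichotomy b c with h4 | h4 | h4
      · exact ⟨b, c, a, hb', hc', ha, h4, h3⟩
      · exact absurd h4 hbc
      · exact ⟨c, b, a, hc', hb', ha, h4, h1⟩

lemma shorten {Z : Set (Clause α)} (Zfin : Finset (Clause α)) (hZ : ↑Zfin = Z)
    {C D : Clause α} (hCD : C ≠ D) (hconn : ∃ k, AltPathFromTo Z C D k) :
    ∃ m ≤ 2 * Zfin.card - 2, AltPathFromTo Z C D m := by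
  have hPne : {k | AltPathFromTo Z C D k}.Nonempty := hconn
  set m₀ := sInf {k | AltPathFromTo Z C D k} with hm₀def
  have hm₀ : AltPathFromTo Z C D m₀ := Nat.sInf_mem hPne
  have hmin : ∀ m' < m₀, ¬ AltPathFromTo Z C D m' := fun m' hm' hP =>
    Nat.notMem_of_lt_sInf hm' hP
  refine ⟨m₀, ?_, hm₀⟩
  by_contra hbig
  push_neg at hbig
  obtain ⟨Ds, ps, hap, hhead, hlast, hlen⟩ := hm₀
  have hne : Ds ≠ [] := hap.1
  have hplen : ps.length + 1 = Ds.length := hap.2.1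
  have hmemZ : ∀ C' ∈ Ds, C' ∈ Z := hap.2.2.1
  have hpos : 0 < Ds.length := List.length_pos_iff.2 hne
  have hD0 : Ds.getD 0 ∅ = C := by
    rw [List.head?_eq_getElem?] at hhead
    rw [List.getD_eq_getElem?_getD, hhead]
    rfl
  have hDlast : Ds.getD (Ds.length - 1) ∅ = D := getLast?_getD hlast
  have hm2 : 2 ≤ m₀ := by
    by_contra hlt
    push_neg at hlt
    have h1 : m₀ = 1 := by omega
    apply hCD
    rw [← hD0, ← hDlast]
    have e : Ds.length - 1 = 0 := by omega
    rw [e]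
  have hnoC : ∀ t, 0 < t → t < Ds.length → Ds.getD t ∅ ≠ C := by
    intro t ht0 htl hEq
    apply hmin (m₀ - t) (by omega)
    refine ⟨Ds.drop t, ps.drop t, altPath_drop hap htl, ?_, ?_, ?_⟩
    · rw [head?_drop (d := ∅) htl, hEq]
    · rw [getLast?_drop' htl]; exact hlast
    · rw [List.length_drop, hlen]
  have hnoD : ∀ t, t < Ds.length - 1 → Ds.getD t ∅ ≠ D := by
    intro t htl hEq
    have htl' : t < Ds.length := by omega
    apply hmin (t + 1) (by omega)
    refine ⟨Ds.take (t+1), ps.take t, altPath_take hap htl', ?_, ?_, ?_⟩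
    · rw [head?_take (by omega), hhead]
    · rw [getLast?_take (d := ∅) htl', hEq]
    · rw [List.length_take]; omega
  have hmemD : ∀ t, t < Ds.length → Ds.getD t ∅ ∈ Zfin := by
    intro t htl
    have h1 : Ds.getD t ∅ ∈ Z := by
      apply hmemZ
      rw [List.getD_eq_getElem _ _ htl]
      exact List.getElem_mem _
    rw [← hZ] at h1
    exact h1
  have hCZfin : C ∈ Zfin := by rw [← hD0]; exact hmemD 0 hpos
  have hDZfin : D ∈ Zfin := by rw [← hDlast]; exact hmemD _ (by omega)
  have hk2 : 2 ≤ Zfin.card := Finset.one_lt_card.2 ⟨C, hCZfin, D, hDZfin, hCD⟩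
  have hmaps : ∀ t ∈ Finset.Ico 1 (m₀ - 1), Ds.getD t ∅ ∈ (Zfin.erase C).erase D := by
    intro t ht
    obtain ⟨ht1, ht2⟩ := Finset.mem_Ico.1 ht
    have htl : t < Ds.length := by omega
    exact Finset.mem_erase.2 ⟨hnoD t (by omega), Finset.mem_erase.2
      ⟨hnoC t (by omega) htl, hmemD t htl⟩⟩
  have hcard : ((Zfin.erase C).erase D).card * 2 < (Finset.Ico 1 (m₀ - 1)).card := by
    rw [Nat.card_Ico, Finset.card_erase_of_mem (Finset.mem_erase.2 ⟨Ne.symm hCD, hDZfin⟩),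
      Finset.card_erase_of_mem hCZfin]
    omega
  obtain ⟨E, hE, hfib⟩ := Finset.exists_lt_card_fiber_of_mul_lt_card_of_maps_to hmaps hcard
  obtain ⟨i, j, l, hi, hj, hl, hij, hjl⟩ := three_distinct hfib
  have hiF := Finset.mem_filter.1 hi
  have hjF := Finset.mem_filter.1 hj
  have hlF := Finset.mem_filter.1 hl
  obtain ⟨hiI1, hiI2⟩ := Finset.mem_Ico.1 hiF.1
  obtain ⟨hjI1, hjI2⟩ := Finset.mem_Ico.1 hjF.1
  obtain ⟨hlI1, hlI2⟩ := Finset.mem_Ico.1 hlF.1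
  have hpsl : ps.length = m₀ - 1 := by omega
  have hjps : j < ps.length := by omega
  have hlps : l < ps.length := by omega
  have hi1 : i - 1 < ps.length := by omega
  have hj1 : j - 1 < ps.length := by omega
  have finish : ∀ (a b : ℕ) (hbps : b < ps.length) (ha1 : a - 1 < ps.length), 1 ≤ a → a < b →
      Ds.getD a ∅ = Ds.getD b ∅ →
      (ps.get ⟨b, hbps⟩).1 ≠ (ps.get ⟨a - 1, ha1⟩).2 → False := by
    intro a b hbps ha1 ha hab heq2 hjun
    have hsp := altPath_splice hap ha hab hbps ha1 heq2 hjun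
    have hTne : Ds.take (a+1) ≠ [] := by
      intro hnil
      have : (Ds.take (a+1)).length = 0 := by rw [hnil]; rfl
      rw [List.length_take] at this
      omega
    have hBne : Ds.drop (b+1) ≠ [] := by
      intro hnil
      have : (Ds.drop (b+1)).length = 0 := by rw [hnil]; rfl
      rw [List.length_drop] at this
      omega
    apply hmin ((a + 1) + (Ds.length - (b + 1))) (by omega)
    refine ⟨_, _, hsp, ?_, ?_, ?_⟩
    · rw [head?_append_left hTne, head?_take (by omega), hhead]
    · rw [getLast?_append_right hBne, getLast?_drop' (by omega)]; exact hlast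
    · rw [List.length_append, List.length_take, List.length_drop]; omega
  by_cases c1 : (ps.get ⟨j, hjps⟩).1 ≠ (ps.get ⟨i - 1, hi1⟩).2
  · exact finish i j hjps hi1 (by omega) hij (by rw [hiF.2, hjF.2]) c1
  · by_cases c2 : (ps.get ⟨l, hlps⟩).1 ≠ (ps.get ⟨i - 1, hi1⟩).2
    · exact finish i l hlps hi1 (by omega) (lt_trans hij hjl) (by rw [hiF.2, hlF.2]) c2
    · push_neg at c1 c2
      have c3 : (ps.get ⟨l, hlps⟩).1 ≠ (ps.get ⟨j - 1, hj1⟩).2 := by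
        intro hc
        have halt' := hap.2.2.2.2 (j - 1) (by omega : (j - 1) + 1 < ps.length)
        have ej : j - 1 + 1 = j := by omega
        simp only [ej] at halt'
        exact halt' (c1.trans (c2.symm.trans hc))
      exact finish j l hlps hj1 (by omega) hjl (by rw [hjF.2, hlF.2]) c3

end Stmt4

open Stmt4

/-- If there is a resolution refutation of length `n` from `S`, then `S` has a
minimal unsatisfiable subset `T'` in which any two distinct clauses are joined by
an alternating path of length at most `2n − 2`. -/
theorem stmt_4 {α : Type} [DecidableEq α] (S : Set (Clause α)) (n : ℕ)
    (Cs : List (Clause α)) (h : IsRefutation S Cs n) :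
    ∃ T' ⊆ S, MinimalUnsat T' ∧
      ∀ C ∈ T', ∀ D ∈ T', C ≠ D → ∃ m ≤ 2 * n - 2, AltPathFromTo T' C D m := by
  obtain ⟨hseq, hlen, hlast⟩ := h
  set S₀ : Set (Clause α) := (↑Cs.toFinset : Set (Clause α)) ∩ S with hS₀def
  have hS₀ref : IsRefutation S₀ Cs n := ⟨seq_restrict hseq, hlen, hlast⟩
  have hS₀unsat : ¬ Satisfiable S₀ := refutation_unsat hS₀ref
  have hS₀fin : S₀.Finite := Set.Finite.inter_of_left (Cs.toFinset.finite_toSet) S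
  obtain ⟨T', hT'S₀, hT'fin, hT'mu⟩ := exists_mu S₀.ncard S₀ hS₀fin le_rfl hS₀unsat
  have hT'S : T' ⊆ S := hT'S₀.trans Set.inter_subset_right
  refine ⟨T', hT'S, hT'mu, ?_⟩
  intro C hC D hD hCD
  have hconn := mu_connected hT'fin hT'mu C hC D hD
  have hZ : (↑hT'fin.toFinset : Set (Clause α)) = T' := hT'fin.coe_toFinset
  obtain ⟨m, hm, hpath⟩ := shorten hT'fin.toFinset hZ hCD hconn
  have hsub : hT'fin.toFinset ⊆ Cs.toFinset := by
    intro x hx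
    have hx1 : x ∈ T' := by rwa [Set.Finite.mem_toFinset] at hx
    have hx2 : x ∈ S₀ := hT'S₀ hx1
    exact Finset.mem_coe.1 hx2.1
  have hcard : hT'fin.toFinset.card ≤ n := by
    calc hT'fin.toFinset.card ≤ Cs.toFinset.card := Finset.card_le_card hsub
      _ ≤ Cs.length := Cs.toFinset_card_le
      _ = n := hlen
  exact ⟨m, by omega, hpath⟩
end
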